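/- arXiv:1509.08097 — 5 statements merged into one kernel-verified Lean document; each statement's English description precedes it below -/
import Mathlib

section
/- Let 1 < p < ∞ and let (X_n)_{n≥1} be a sequence of real Banach spaces each of which has the Opial property. Then the p-Cesàro sum [⊕_{n∈ℕ} X_n]_{ces_p} has the Opial property: for every sequence (x^{(k)})_{k∈ℕ} in the Cesàro sum converging weakly to 0 (equivalently, via the isometric embedding S with (Sx)(n) = (1/n)(x_1,…,x_n), such that (S x^{(k)})_k converges weakly to 0 in the ℓ^p-sum [⊕_{n∈ℕ} (X_1 ⊕₁ ⋯ ⊕₁ X_n)]_p) and every nonzero x in the Cesàro sum, limsup_{k→∞} ‖x^{(k)}‖_{ces_p} < limsup_{k→∞} ‖x^{(k)} − x‖_{ces_p}. -/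
open Filter
open scoped ENNReal Topology

/-- The Cesàro norm `‖x‖_{ces_p} = (∑_{n≥1} ((1/n) ∑_{i=1}^n ‖x_i‖)^p)^{1/p}` of a
vector-valued sequence `x` (indexed by `ℕ` starting from `0`). -/
noncomputable def cesNorm (p : ℝ) {X : ℕ → Type*} [∀ n, NormedAddCommGroup (X n)]
    (x : ∀ n, X n) : ℝ :=
  (∑' n : ℕ, ((∑ i ∈ Finset.range (n + 1), ‖x i‖) / ((n : ℝ) + 1)) ^ p) ^ (1 / p)

/-- Membership in the `p`-Cesàro sum `[⊕ₙ Xₙ]_{ces_p}`. -/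
def MemCes (p : ℝ) {X : ℕ → Type*} [∀ n, NormedAddCommGroup (X n)] (x : ∀ n, X n) : Prop :=
  Summable fun n : ℕ => ((∑ i ∈ Finset.range (n + 1), ‖x i‖) / ((n : ℝ) + 1)) ^ p

/-- `X₁ ⊕₁ ⋯ ⊕₁ Xₙ`, the finite direct sum with the `ℓ¹`-norm. -/
abbrev cesTarget (X : ℕ → Type*) (n : ℕ) : Type _ := PiLp 1 (fun i : Fin (n + 1) => X i)

/-- Saejung's embedding `S`, `(Sx)(n) = (1/n)(x₁, …, xₙ)`, from the Cesàro sum into the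
`ℓ^p`-sum of the spaces `X₁ ⊕₁ ⋯ ⊕₁ Xₙ`. -/
noncomputable def cesEmbed {X : ℕ → Type*} [∀ n, NormedAddCommGroup (X n)]
    [∀ n, NormedSpace ℝ (X n)] (x : ∀ n, X n) : ∀ n, cesTarget X n :=
  fun n => ((n : ℝ) + 1)⁻¹ • (WithLp.equiv 1 (∀ i : Fin (n + 1), X i)).symm (fun i => x i)

/-- A real Banach space has the Opial property if
`limsup ‖xₖ‖ < limsup ‖xₖ − x‖` for every weakly null sequence `(xₖ)` and every `x ≠ 0`. -/
def OpialProp (Y : Type*) [NormedAddCommGroup Y] [NormedSpace ℝ Y] : Prop :=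
  ∀ u : ℕ → Y, (∀ φ : Y →L[ℝ] ℝ, Tendsto (fun k => φ (u k)) atTop (𝓝 0)) →
    ∀ x : Y, x ≠ 0 →
      limsup (fun k => ‖u k‖) atTop < limsup (fun k => ‖u k - x‖) atTop

section Aux

variable {Y : ℕ → Type*} [∀ n, NormedAddCommGroup (Y n)] [∀ n, NormedSpace ℝ (Y n)]
  {q : ℝ≥0∞} [Fact (1 ≤ q)]

/-- Coordinate projection as a continuous linear map. -/
noncomputable def lpProj (hq : q ≠ 0) (n : ℕ) : lp Y q →L[ℝ] Y n :=
  LinearMap.mkContinuous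
    { toFun := fun f => f n
      map_add' := fun f g => by
        have := lp.coeFn_add f g
        exact congrFun this n
      map_smul' := fun c f => by
        have := lp.coeFn_smul c f
        simpa using congrFun this n }
    1 (fun f => by rw [one_mul]; exact lp.norm_apply_le_norm hq f n)

@[simp] lemma lpProj_apply (hq : q ≠ 0) (n : ℕ) (f : lp Y q) : lpProj hq n f = f n := rfl

end Aux

lemma ultra_lim_exists (𝒰 : Ultrafilter ℕ) {f : ℕ → ℝ} {C : ℝ} (hf : ∀ k, |f k| ≤ C) :
    ∃ c, Tendsto f (𝒰 : Filter ℕ) (𝓝 c) := by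
  obtain ⟨c, -, hc⟩ := (isCompact_Icc (a := -C) (b := C)).ultrafilter_le_nhds (𝒰.map f)
    (by
      rw [Ultrafilter.coe_map, le_principal_iff, Filter.mem_map]
      exact Filter.univ_mem' fun k => abs_le.mp (hf k))
  exact ⟨c, by rwa [Ultrafilter.coe_map] at hc⟩

lemma ultra_le_limsup {f : ℕ → ℝ} {𝒰 : Ultrafilter ℕ} (h𝒰 : (𝒰 : Filter ℕ) ≤ atTop) {c : ℝ}
    (hc : Tendsto f (𝒰 : Filter ℕ) (𝓝 c)) (hbdd : IsBoundedUnder (· ≤ ·) atTop f) :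
    c ≤ limsup f atTop := by
  by_contra h
  push_neg at h
  have hev : ∀ᶠ k in atTop, f k < (limsup f atTop + c) / 2 :=
    eventually_lt_of_limsup_lt (by linarith) hbdd
  have : c ≤ (limsup f atTop + c) / 2 :=
    le_of_tendsto hc ((hev.filter_mono h𝒰).mono fun k hk => hk.le)
  linarith

lemma exists_ultra_limsup {f : ℕ → ℝ} (hb : IsBoundedUnder (· ≤ ·) atTop f)
    (hcb : IsCoboundedUnder (· ≤ ·) atTop f) :
    ∃ 𝒰 : Ultrafilter ℕ, (𝒰 : Filter ℕ) ≤ atTop ∧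
      Tendsto f (𝒰 : Filter ℕ) (𝓝 (limsup f atTop)) := by
  set L := limsup f atTop with hL
  have hcl : MapClusterPt L atTop f := by
    rw [Metric.nhds_basis_ball.mapClusterPt_iff_frequently]
    intro ε hε
    have h1 : ∃ᶠ k in atTop, L - ε < f k := frequently_lt_of_lt_limsup hcb (by linarith)
    have h2 : ∀ᶠ k in atTop, f k < L + ε := eventually_lt_of_limsup_lt (by linarith) hb
    refine (h1.and_eventually h2).mono fun k hk => ?_
    rw [Metric.mem_ball, Real.dist_eq, abs_sub_lt_iff]
    constructor <;> linarith [hk.1, hk.2]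
  have hne : (atTop ⊓ comap f (𝓝 L)).NeBot := by
    rw [← Filter.map_neBot_iff f, Filter.push_pull, inf_comm]
    exact hcl
  refine ⟨Ultrafilter.of (atTop ⊓ comap f (𝓝 L)), ?_, ?_⟩
  · exact (Ultrafilter.of_le _).trans inf_le_left
  · rw [Filter.tendsto_iff_comap]
    exact (Ultrafilter.of_le _).trans inf_le_right

lemma opial_ultra {Y : Type*} [NormedAddCommGroup Y] [NormedSpace ℝ Y] (hOp : OpialProp Y)
    {w : ℕ → Y} (hw : ∀ φ : Y →L[ℝ] ℝ, Tendsto (fun k => φ (w k)) atTop (𝓝 0))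
    {c : Y} (hc : c ≠ 0) {𝒰 : Ultrafilter ℕ} (h𝒰 : (𝒰 : Filter ℕ) ≤ atTop)
    {a b : ℝ} (ha : Tendsto (fun k => ‖w k‖) (𝒰 : Filter ℕ) (𝓝 a))
    (hb : Tendsto (fun k => ‖w k - c‖) (𝒰 : Filter ℕ) (𝓝 b)) : a < b := by
  have hfreq : ∀ j : ℕ, ∃ᶠ k in atTop,
      |‖w k‖ - a| < 1 / (j + 1) ∧ |‖w k - c‖ - b| < 1 / (j + 1) := by
    intro j
    have hε : (0 : ℝ) < 1 / (j + 1) := by positivity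
    have h1 : ∀ᶠ k in (𝒰 : Filter ℕ), |‖w k‖ - a| < 1 / (j + 1) := by
      have := Metric.tendsto_nhds.mp ha (1 / (j + 1)) hε
      simpa [Real.dist_eq] using this
    have h2 : ∀ᶠ k in (𝒰 : Filter ℕ), |‖w k - c‖ - b| < 1 / (j + 1) := by
      have := Metric.tendsto_nhds.mp hb (1 / (j + 1)) hε
      simpa [Real.dist_eq] using this
    exact ((h1.and h2).frequently).filter_mono h𝒰
  obtain ⟨φ, hφ, hP⟩ := Filter.extraction_forall_of_frequently hfreq
  have hj : Tendsto (fun j : ℕ => 1 / ((j : ℝ) + 1)) atTop (𝓝 0) :=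
    tendsto_one_div_add_atTop_nhds_zero_nat
  have h1 : Tendsto (fun j => ‖w (φ j)‖) atTop (𝓝 a) := by
    rw [← tendsto_sub_nhds_zero_iff]
    exact squeeze_zero_norm (fun j => (hP j).1.le) hj
  have h2 : Tendsto (fun j => ‖w (φ j) - c‖) atTop (𝓝 b) := by
    rw [← tendsto_sub_nhds_zero_iff]
    exact squeeze_zero_norm (fun j => (hP j).2.le) hj
  have := hOp (fun j => w (φ j)) (fun ψ => (hw ψ).comp hφ.tendsto_atTop) c hc
  rwa [h1.limsup_eq, h2.limsup_eq] at this

lemma memℓp_trunc {Y : ℕ → Type*} [∀ n, NormedAddCommGroup (Y n)] {q : ℝ≥0∞}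
    (hq : 0 < q.toReal) {v : ∀ n, Y n} (hv : Memℓp v q) (N : ℕ) :
    Memℓp (fun n => if n < N then v n else 0) q := by
  apply memℓp_gen
  refine Summable.of_nonneg_of_le (fun n => Real.rpow_nonneg (norm_nonneg _) _)
    (fun n => ?_) (hv.summable hq)
  by_cases h : n < N <;> simp [h, Real.rpow_nonneg (norm_nonneg _),
    Real.zero_rpow (ne_of_gt hq), Real.rpow_le_rpow (norm_nonneg _) le_rfl hq.le]

lemma lp_opial (p : ℝ) (hp : 1 < p) [Fact (1 ≤ ENNReal.ofReal p)]
    (Y : ℕ → Type*) [∀ n, NormedAddCommGroup (Y n)] [∀ n, NormedSpace ℝ (Y n)]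
    (hOp : ∀ n, OpialProp (Y n)) : OpialProp (lp Y (ENNReal.ofReal p)) := by
  have hp0 : (0 : ℝ) < p := by linarith
  set q := ENNReal.ofReal p with hqdef
  intro u hweak v hv
  have hqt : q.toReal = p := ENNReal.toReal_ofReal hp0.le
  have hqt0 : 0 < q.toReal := by rw [hqt]; exact hp0
  have hq0 : q ≠ 0 := by
    intro h
    rw [h] at hqt0; simp at hqt0
  -- Banach–Steinhaus: weakly null sequences are bounded
  obtain ⟨C, hC⟩ : ∃ C, ∀ k, ‖u k‖ ≤ C := by
    obtain ⟨C, hC⟩ := banach_steinhaus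
      (g := fun k => NormedSpace.inclusionInDoubleDual ℝ (lp Y q) (u k))
      (fun φ => by
        obtain ⟨B, hB⟩ := isBounded_iff_forall_norm_le.mp
          (Metric.isBounded_range_of_tendsto _ (hweak φ))
        exact ⟨B, fun k => hB _ (Set.mem_range_self k)⟩)
    refine ⟨C, fun k => ?_⟩
    have h2 := (NormedSpace.inclusionInDoubleDualLi (𝕜 := ℝ) (E := lp Y q)).norm_map (u k)
    calc ‖u k‖ = ‖NormedSpace.inclusionInDoubleDual ℝ (lp Y q) (u k)‖ := h2.symm
      _ ≤ C := hC k
  have hCnonneg : 0 ≤ C := le_trans (norm_nonneg _) (hC 0)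
  have hbdd1 : IsBoundedUnder (· ≤ ·) atTop (fun k => ‖u k‖) :=
    Filter.isBoundedUnder_of ⟨C, hC⟩
  have hcb1 : IsCoboundedUnder (· ≤ ·) atTop (fun k => ‖u k‖) :=
    Filter.isCoboundedUnder_le_of_le atTop (fun k => norm_nonneg _)
  obtain ⟨𝒰, h𝒰, hL1⟩ := exists_ultra_limsup hbdd1 hcb1
  set L1 := limsup (fun k => ‖u k‖) atTop with hL1def
  -- coordinatewise weak nullity
  have coordweak : ∀ n (ψ : Y n →L[ℝ] ℝ),
      Tendsto (fun k => ψ ((u k : ∀ m, Y m) n)) atTop (𝓝 0) := by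
    intro n ψ
    have := hweak (ψ.comp (lpProj hq0 n))
    simpa using this
  -- ultrafilter limits of coordinate norms
  have hcb : ∀ (n : ℕ) (k : ℕ), |‖(u k : ∀ m, Y m) n‖| ≤ C := fun n k => by
    rw [abs_of_nonneg (norm_nonneg _)]
    exact (lp.norm_apply_le_norm hq0 (u k) n).trans (hC k)
  choose α hα using fun n => ultra_lim_exists 𝒰 (hcb n)
  have hβb : ∀ (n : ℕ) (k : ℕ), |‖(u k : ∀ m, Y m) n - (v : ∀ m, Y m) n‖| ≤ C + ‖v‖ := by
    intro n k
    rw [abs_of_nonneg (norm_nonneg _)]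
    calc ‖(u k : ∀ m, Y m) n - (v : ∀ m, Y m) n‖
        ≤ ‖(u k : ∀ m, Y m) n‖ + ‖(v : ∀ m, Y m) n‖ := norm_sub_le _ _
      _ ≤ C + ‖v‖ := add_le_add ((lp.norm_apply_le_norm hq0 (u k) n).trans (hC k))
          (lp.norm_apply_le_norm hq0 v n)
  choose β hβ using fun n => ultra_lim_exists 𝒰 (hβb n)
  have hαnonneg : ∀ n, 0 ≤ α n := fun n =>
    ge_of_tendsto' (hα n) (fun k => norm_nonneg _)
  have hαβ : ∀ n, α n ≤ β n := by
    intro n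
    by_cases hvn : (v : ∀ m, Y m) n = 0
    · have he : (fun k => ‖(u k : ∀ m, Y m) n - (v : ∀ m, Y m) n‖)
          = fun k => ‖(u k : ∀ m, Y m) n‖ := by
        funext k; rw [hvn, sub_zero]
      have := tendsto_nhds_unique (he ▸ hβ n) (hα n)
      exact this.ge
    · exact (opial_ultra (hOp n) (coordweak n) hvn h𝒰 (hα n) (hβ n)).le
  obtain ⟨n0, hn0⟩ : ∃ n0, (v : ∀ m, Y m) n0 ≠ 0 := by
    by_contra h
    push_neg at h
    exact hv (lp.ext (funext fun n => h n))
  have hstrict : α n0 < β n0 := opial_ultra (hOp n0) (coordweak n0) hn0 h𝒰 (hα n0) (hβ n0)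
  set δ := β n0 ^ p - α n0 ^ p with hδdef
  have hδ : 0 < δ := sub_pos.mpr (Real.rpow_lt_rpow (hαnonneg n0) hstrict hp0)
  -- the limit L2' of ‖u k - v‖ along the ultrafilter
  obtain ⟨L2', hL2'⟩ := ultra_lim_exists 𝒰 (f := fun k => ‖u k - v‖) (C := C + ‖v‖)
    (fun k => by
      rw [abs_of_nonneg (norm_nonneg _)]
      calc ‖u k - v‖ ≤ ‖u k‖ + ‖v‖ := norm_sub_le _ _
        _ ≤ C + ‖v‖ := add_le_add (hC k) le_rfl)
  have hL2'nonneg : 0 ≤ L2' := ge_of_tendsto' hL2' (fun k => norm_nonneg _)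
  -- truncations
  set w₁ : ℕ → lp Y q := fun N =>
    ⟨fun n => if n < N then (v : ∀ m, Y m) n else 0, memℓp_trunc hqt0 (lp.memℓp v) N⟩ with hw₁
  set t : ℕ → ℝ := fun N => ‖v - w₁ N‖ with ht
  have htnonneg : ∀ N, 0 ≤ t N := fun N => norm_nonneg _
  -- key inequality for each N > n0
  have key : ∀ N, n0 < N → L1 ^ p + δ ≤ (L2' + t N) ^ p := by
    intro N hN
    have hsum : ∀ k, (∑ n ∈ Finset.range N, ‖(u k : ∀ m, Y m) n - (v : ∀ m, Y m) n‖ ^ p)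
        + (‖u k‖ ^ p - ∑ n ∈ Finset.range N, ‖(u k : ∀ m, Y m) n‖ ^ p)
        ≤ (‖u k - v‖ + t N) ^ p := by
      intro k
      -- the element u k - w₁ N
      have hcoe : ∀ n, ((u k - w₁ N : lp Y q) : ∀ m, Y m) n
          = (u k : ∀ m, Y m) n - (if n < N then (v : ∀ m, Y m) n else 0) := by
        intro n
        rw [lp.coeFn_sub]
        rfl
      have hsummable1 : Summable fun n => ‖((u k - w₁ N : lp Y q) : ∀ m, Y m) n‖ ^ p := by
        have := (lp.memℓp (u k - w₁ N)).summable hqt0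
        rwa [hqt] at this
      have hsummable2 : Summable fun n => ‖(u k : ∀ m, Y m) n‖ ^ p := by
        have := (lp.memℓp (u k)).summable hqt0
        rwa [hqt] at this
      have hs1 : ‖u k - w₁ N‖ ^ p = ∑' n, ‖((u k - w₁ N : lp Y q) : ∀ m, Y m) n‖ ^ p := by
        have := lp.norm_rpow_eq_tsum hqt0 (u k - w₁ N)
        rwa [hqt] at this
      have hs2 : ‖u k‖ ^ p = ∑' n, ‖(u k : ∀ m, Y m) n‖ ^ p := by
        have := lp.norm_rpow_eq_tsum hqt0 (u k)
        rwa [hqt] at this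
      have hsplit1 := Summable.sum_add_tsum_nat_add N hsummable1
      have hsplit2 := Summable.sum_add_tsum_nat_add N hsummable2
      have he1 : ∀ n ∈ Finset.range N, ‖((u k - w₁ N : lp Y q) : ∀ m, Y m) n‖ ^ p
          = ‖(u k : ∀ m, Y m) n - (v : ∀ m, Y m) n‖ ^ p := by
        intro n hn
        rw [hcoe n, if_pos (Finset.mem_range.mp hn)]
      have he2 : ∀ n : ℕ, ‖((u k - w₁ N : lp Y q) : ∀ m, Y m) (n + N)‖ ^ p
          = ‖(u k : ∀ m, Y m) (n + N)‖ ^ p := by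
        intro n
        rw [hcoe (n + N), if_neg (by omega), sub_zero]
      have hA : ‖u k - w₁ N‖ ^ p
          = (∑ n ∈ Finset.range N, ‖(u k : ∀ m, Y m) n - (v : ∀ m, Y m) n‖ ^ p)
            + ∑' n, ‖(u k : ∀ m, Y m) (n + N)‖ ^ p := by
        rw [hs1, ← hsplit1, Finset.sum_congr rfl he1, tsum_congr he2]
      have hB : (∑' n, ‖(u k : ∀ m, Y m) (n + N)‖ ^ p)
          = ‖u k‖ ^ p - ∑ n ∈ Finset.range N, ‖(u k : ∀ m, Y m) n‖ ^ p := by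
        rw [hs2, ← hsplit2]; ring
      have htri : ‖u k - w₁ N‖ ≤ ‖u k - v‖ + t N := by
        have : u k - w₁ N = (u k - v) + (v - w₁ N) := by abel
        rw [this]
        exact norm_add_le _ _
      calc (∑ n ∈ Finset.range N, ‖(u k : ∀ m, Y m) n - (v : ∀ m, Y m) n‖ ^ p)
          + (‖u k‖ ^ p - ∑ n ∈ Finset.range N, ‖(u k : ∀ m, Y m) n‖ ^ p)
          = ‖u k - w₁ N‖ ^ p := by rw [hA, hB]
        _ ≤ (‖u k - v‖ + t N) ^ p :=
            Real.rpow_le_rpow (norm_nonneg _) htri hp0.le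
    -- take limits along the ultrafilter
    have hrpow : ∀ x : ℝ, ContinuousAt (fun s : ℝ => s ^ p) x := fun x =>
      Real.continuousAt_rpow_const x p (Or.inr hp0.le)
    have hT1 : Tendsto (fun k => ∑ n ∈ Finset.range N,
        ‖(u k : ∀ m, Y m) n - (v : ∀ m, Y m) n‖ ^ p) (𝒰 : Filter ℕ)
        (𝓝 (∑ n ∈ Finset.range N, β n ^ p)) := by
      refine tendsto_finset_sum _ fun n _ => ?_
      exact ((hrpow (β n)).tendsto).comp (hβ n)
    have hT2 : Tendsto (fun k => ∑ n ∈ Finset.range N,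
        ‖(u k : ∀ m, Y m) n‖ ^ p) (𝒰 : Filter ℕ)
        (𝓝 (∑ n ∈ Finset.range N, α n ^ p)) := by
      refine tendsto_finset_sum _ fun n _ => ?_
      exact ((hrpow (α n)).tendsto).comp (hα n)
    have hT3 : Tendsto (fun k => ‖u k‖ ^ p) (𝒰 : Filter ℕ) (𝓝 (L1 ^ p)) :=
      ((hrpow L1).tendsto).comp hL1
    have hT4 : Tendsto (fun k => (‖u k - v‖ + t N) ^ p) (𝒰 : Filter ℕ)
        (𝓝 ((L2' + t N) ^ p)) :=
      ((hrpow (L2' + t N)).tendsto).comp (hL2'.add_const (t N))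
    have hle : (∑ n ∈ Finset.range N, β n ^ p)
        + (L1 ^ p - ∑ n ∈ Finset.range N, α n ^ p) ≤ (L2' + t N) ^ p :=
      le_of_tendsto_of_tendsto' ((hT1.add (hT3.sub hT2))) hT4 hsum
    have hsum_ge : δ ≤ (∑ n ∈ Finset.range N, β n ^ p)
        - ∑ n ∈ Finset.range N, α n ^ p := by
      rw [← Finset.sum_sub_distrib]
      refine Finset.single_le_sum (f := fun n => β n ^ p - α n ^ p) (fun n _ => ?_)
        (Finset.mem_range.mpr hN)
      exact sub_nonneg.mpr (Real.rpow_le_rpow (hαnonneg n) (hαβ n) hp0.le)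
    linarith
  -- let N → ∞ : t N → 0
  have htt : Tendsto t atTop (𝓝 0) := by
    have hsummv : Summable fun n => ‖(v : ∀ m, Y m) n‖ ^ p := by
      have := (lp.memℓp v).summable hqt0
      rwa [hqt] at this
    have hform : ∀ N, t N = (∑' n, ‖(v : ∀ m, Y m) (n + N)‖ ^ p) ^ p⁻¹ := by
      intro N
      have hcoe : ∀ n, ((v - w₁ N : lp Y q) : ∀ m, Y m) n
          = if n < N then 0 else (v : ∀ m, Y m) n := by
        intro n
        rw [lp.coeFn_sub]
        by_cases h : n < N <;> simp [hw₁, h]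
      have hsummable : Summable fun n => ‖((v - w₁ N : lp Y q) : ∀ m, Y m) n‖ ^ p := by
        have := (lp.memℓp (v - w₁ N)).summable hqt0
        rwa [hqt] at this
      have hs : t N ^ p = ∑' n, ‖((v - w₁ N : lp Y q) : ∀ m, Y m) n‖ ^ p := by
        have := lp.norm_rpow_eq_tsum hqt0 (v - w₁ N)
        rwa [hqt] at this
      have hsplit := Summable.sum_add_tsum_nat_add N hsummable
      have hzero : ∀ n ∈ Finset.range N, ‖((v - w₁ N : lp Y q) : ∀ m, Y m) n‖ ^ p = 0 := by
        intro n hn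
        rw [hcoe n, if_pos (Finset.mem_range.mp hn)]
        simp [Real.zero_rpow (ne_of_gt hp0)]
      have htail : ∀ n : ℕ, ‖((v - w₁ N : lp Y q) : ∀ m, Y m) (n + N)‖ ^ p
          = ‖(v : ∀ m, Y m) (n + N)‖ ^ p := by
        intro n
        rw [hcoe (n + N), if_neg (by omega)]
      have : t N ^ p = ∑' n, ‖(v : ∀ m, Y m) (n + N)‖ ^ p := by
        rw [hs, ← hsplit, Finset.sum_eq_zero hzero, tsum_congr htail, zero_add]
      rw [← this, Real.rpow_rpow_inv (htnonneg N) (ne_of_gt hp0)]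
    rw [show (0 : ℝ) = (0 : ℝ) ^ p⁻¹ from (Real.zero_rpow (inv_ne_zero (ne_of_gt hp0))).symm]
    rw [funext hform]
    exact ((Real.continuousAt_rpow_const 0 p⁻¹
      (Or.inr (by positivity))).tendsto).comp (tendsto_sum_nat_add (fun n => ‖(v : ∀ m, Y m) n‖ ^ p))
  -- conclude L1^p + δ ≤ L2'^p
  have hfinal : L1 ^ p + δ ≤ L2' ^ p := by
    have hTT : Tendsto (fun N => (L2' + t N) ^ p) atTop (𝓝 (L2' ^ p)) := by
      have h1 : Tendsto (fun N => L2' + t N) atTop (𝓝 L2') := by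
        simpa using (tendsto_const_nhds (x := L2')).add htt
      exact ((Real.continuousAt_rpow_const L2' p (Or.inr hp0.le)).tendsto).comp h1
    refine ge_of_tendsto hTT ?_
    filter_upwards [Filter.eventually_gt_atTop n0] with N hN
    exact key N hN
  have hL1nonneg : 0 ≤ L1 := ge_of_tendsto' hL1 (fun k => norm_nonneg _)
  have hlt : L1 < L2' := by
    by_contra h
    push_neg at h
    have := Real.rpow_le_rpow hL2'nonneg h hp0.le
    linarith
  have hbdd2 : IsBoundedUnder (· ≤ ·) atTop (fun k => ‖u k - v‖) :=
    Filter.isBoundedUnder_of ⟨C + ‖v‖, fun k =>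
      (norm_sub_le _ _).trans (add_le_add (hC k) le_rfl)⟩
  exact lt_of_lt_of_le hlt (ultra_le_limsup h𝒰 hL2' hbdd2)

lemma weak_null_bounded {E : Type*} [NormedAddCommGroup E] [NormedSpace ℝ E]
    {u : ℕ → E} (h : ∀ φ : E →L[ℝ] ℝ, Tendsto (fun k => φ (u k)) atTop (𝓝 0)) :
    ∃ C, ∀ k, ‖u k‖ ≤ C := by
  obtain ⟨C, hC⟩ := banach_steinhaus
    (g := fun k => NormedSpace.inclusionInDoubleDual ℝ E (u k))
    (fun φ => by
      obtain ⟨B, hB⟩ := isBounded_iff_forall_norm_le.mp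
        (Metric.isBounded_range_of_tendsto _ (h φ))
      exact ⟨B, fun k => hB _ (Set.mem_range_self k)⟩)
  refine ⟨C, fun k => ?_⟩
  have h2 := (NormedSpace.inclusionInDoubleDualLi (𝕜 := ℝ) (E := E)).norm_map (u k)
  calc ‖u k‖ = ‖NormedSpace.inclusionInDoubleDual ℝ E (u k)‖ := h2.symm
    _ ≤ C := hC k

lemma pi1_opial {m : ℕ} (Z : Fin m → Type*) [∀ i, NormedAddCommGroup (Z i)]
    [∀ i, NormedSpace ℝ (Z i)] (hOp : ∀ i, OpialProp (Z i)) :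
    OpialProp (PiLp 1 Z) := by
  intro u hweak c hc
  obtain ⟨C, hC⟩ := weak_null_bounded hweak
  have hbdd1 : IsBoundedUnder (· ≤ ·) atTop (fun k => ‖u k‖) :=
    Filter.isBoundedUnder_of ⟨C, hC⟩
  have hcb1 : IsCoboundedUnder (· ≤ ·) atTop (fun k => ‖u k‖) :=
    Filter.isCoboundedUnder_le_of_le atTop (fun k => norm_nonneg (u k))
  obtain ⟨𝒰, h𝒰, hL1⟩ := exists_ultra_limsup hbdd1 hcb1
  have hnorm : ∀ w : PiLp 1 Z, ‖w‖ = ∑ i, ‖w i‖ := by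
    intro w
    rw [PiLp.norm_eq_sum (by norm_num : 0 < (1 : ℝ≥0∞).toReal)]
    simp
  have hcoordle : ∀ (i : Fin m) (w : PiLp 1 Z), ‖w i‖ ≤ ‖w‖ := by
    intro i w
    rw [hnorm w]
    exact Finset.single_le_sum (fun j _ => norm_nonneg _) (Finset.mem_univ i)
  have coordweak : ∀ (i : Fin m) (ψ : Z i →L[ℝ] ℝ),
      Tendsto (fun k => ψ (u k i)) atTop (𝓝 0) := by
    intro i ψ
    have := hweak (ψ.comp (PiLp.proj 1 (𝕜 := ℝ) Z i))
    simpa using this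
  have hcb : ∀ (i : Fin m) (k : ℕ), |‖u k i‖| ≤ C := fun i k => by
    rw [abs_of_nonneg (norm_nonneg _)]
    exact (hcoordle i (u k)).trans (hC k)
  choose α hα using fun i => ultra_lim_exists 𝒰 (hcb i)
  have hβb : ∀ (i : Fin m) (k : ℕ), |‖u k i - c i‖| ≤ C + ‖c‖ := fun i k => by
    rw [abs_of_nonneg (norm_nonneg _)]
    calc ‖u k i - c i‖ ≤ ‖u k i‖ + ‖c i‖ := norm_sub_le _ _
      _ ≤ C + ‖c‖ := add_le_add ((hcoordle i (u k)).trans (hC k)) (hcoordle i c)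
  choose β hβ using fun i => ultra_lim_exists 𝒰 (hβb i)
  have hαβ : ∀ i, α i ≤ β i := by
    intro i
    by_cases hci : c i = 0
    · have he : (fun k => ‖u k i - c i‖) = fun k => ‖u k i‖ := by
        funext k; rw [hci, sub_zero]
      exact (tendsto_nhds_unique (he ▸ hβ i) (hα i)).ge
    · exact (opial_ultra (hOp i) (coordweak i) hci h𝒰 (hα i) (hβ i)).le
  obtain ⟨i0, hi0⟩ : ∃ i0, c i0 ≠ 0 := by
    by_contra h
    push_neg at h
    exact hc (PiLp.ext h)
  have hstrict : α i0 < β i0 := opial_ultra (hOp i0) (coordweak i0) hi0 h𝒰 (hα i0) (hβ i0)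
  have hTα : Tendsto (fun k => ‖u k‖) (𝒰 : Filter ℕ) (𝓝 (∑ i, α i)) := by
    simp_rw [hnorm]
    exact tendsto_finset_sum _ fun i _ => hα i
  have hTβ : Tendsto (fun k => ‖u k - c‖) (𝒰 : Filter ℕ) (𝓝 (∑ i, β i)) := by
    have : ∀ k, ‖u k - c‖ = ∑ i, ‖u k i - c i‖ := by
      intro k
      rw [hnorm]
      exact Finset.sum_congr rfl fun i _ => by rw [PiLp.sub_apply]
    simp_rw [this]
    exact tendsto_finset_sum _ fun i _ => hβ i
  have hL1eq : limsup (fun k => ‖u k‖) atTop = ∑ i, α i := tendsto_nhds_unique hL1 hTα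
  have hlt : (∑ i, α i) < ∑ i, β i := by
    refine Finset.sum_lt_sum (fun i _ => hαβ i) ⟨i0, Finset.mem_univ i0, hstrict⟩
  have hbdd2 : IsBoundedUnder (· ≤ ·) atTop (fun k => ‖u k - c‖) :=
    Filter.isBoundedUnder_of ⟨C + ‖c‖, fun k =>
      (norm_sub_le _ _).trans (add_le_add (hC k) le_rfl)⟩
  rw [hL1eq]
  exact lt_of_lt_of_le hlt (ultra_le_limsup h𝒰 hTβ hbdd2)

section Glue

variable {X : ℕ → Type*} [∀ n, NormedAddCommGroup (X n)] [∀ n, NormedSpace ℝ (X n)]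

lemma norm_cesEmbed (x : ∀ n, X n) (n : ℕ) :
    ‖cesEmbed x n‖ = (∑ i ∈ Finset.range (n + 1), ‖x i‖) / ((n : ℝ) + 1) := by
  rw [cesEmbed, norm_smul]
  rw [PiLp.norm_eq_sum (by norm_num : 0 < (1 : ℝ≥0∞).toReal)]
  simp only [ENNReal.toReal_one, Real.rpow_one, WithLp.equiv_symm_apply, PiLp.toLp_apply, one_div, inv_one]
  rw [← Fin.sum_univ_eq_sum_range (fun i => ‖x i‖) (n + 1)]
  rw [Real.norm_eq_abs, abs_of_nonneg (by positivity : (0:ℝ) ≤ ((n : ℝ) + 1)⁻¹)]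
  rw [div_eq_inv_mul]

lemma cesEmbed_sub (x z : ∀ n, X n) (n : ℕ) :
    cesEmbed (x - z) n = cesEmbed x n - cesEmbed z n := by
  rw [cesEmbed, cesEmbed, cesEmbed, ← smul_sub]
  congr 1

end Glue

/-- If `1 < p < ∞` and every `Xₙ` has the Opial property, then the
`p`-Cesàro sum `[⊕ₙ Xₙ]_{ces_p}` has the Opial property (weak convergence being expressed
via the isometric embedding `S` into the `ℓ^p`-sum `[⊕ₙ (X₁ ⊕₁ ⋯ ⊕₁ Xₙ)]_p`). -/
theorem stmt1 (p : ℝ) (hp : 1 < p) [Fact (1 ≤ ENNReal.ofReal p)]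
    (X : ℕ → Type*) [∀ n, NormedAddCommGroup (X n)] [∀ n, NormedSpace ℝ (X n)]
    [∀ n, CompleteSpace (X n)]
    (hOp : ∀ n, OpialProp (X n))
    (x : ℕ → ∀ n, X n) (hxmem : ∀ k, MemCes p (x k))
    (y : ℕ → lp (cesTarget X) (ENNReal.ofReal p))
    (hy : ∀ k, (y k : ∀ n, cesTarget X n) = cesEmbed (x k))
    (hweak : ∀ φ : lp (cesTarget X) (ENNReal.ofReal p) →L[ℝ] ℝ,
      Tendsto (fun k => φ (y k)) atTop (𝓝 0))
    (z : ∀ n, X n) (hz : MemCes p z) (hz0 : z ≠ 0) :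
    limsup (fun k => cesNorm p (x k)) atTop < limsup (fun k => cesNorm p (x k - z)) atTop := by
  have hp0 : (0 : ℝ) < p := by linarith
  have hqt : (ENNReal.ofReal p).toReal = p := ENNReal.toReal_ofReal hp0.le
  have hqt0 : 0 < (ENNReal.ofReal p).toReal := by rw [hqt]; exact hp0
  have hvmem : Memℓp (cesEmbed z) (ENNReal.ofReal p) := memℓp_gen (by
    rw [hqt]
    exact hz.congr fun n => by rw [norm_cesEmbed])
  set v : lp (cesTarget X) (ENNReal.ofReal p) := ⟨cesEmbed z, hvmem⟩ with hvdef
  have hvcoe : (v : ∀ n, cesTarget X n) = cesEmbed z := rfl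
  have hvne : v ≠ 0 := by
    intro h
    obtain ⟨i, hi⟩ := Function.ne_iff.mp hz0
    apply hi
    have hzi : cesEmbed z i = 0 := by
      have := congrArg (fun w : lp (cesTarget X) (ENNReal.ofReal p) =>
        (w : ∀ n, cesTarget X n) i) h
      simpa [hvcoe] using this
    have hnrm : (∑ j ∈ Finset.range (i + 1), ‖z j‖) / ((i : ℝ) + 1) = 0 := by
      rw [← norm_cesEmbed z i, hzi, norm_zero]
    have hsum0 : ∑ j ∈ Finset.range (i + 1), ‖z j‖ = 0 := by
      have hpos : (0 : ℝ) < (i : ℝ) + 1 := by positivity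
      field_simp at hnrm
      simpa using hnrm
    have := (Finset.sum_eq_zero_iff_of_nonneg (fun j _ => norm_nonneg _)).mp hsum0 i
      (Finset.self_mem_range_succ i)
    exact norm_eq_zero.mp this
  have hOpT : ∀ n, OpialProp (cesTarget X n) := fun n => pi1_opial _ (fun i => hOp i)
  have hnorm1 : ∀ k, cesNorm p (x k) = ‖y k‖ := by
    intro k
    rw [lp.norm_eq_tsum_rpow hqt0 (y k), hqt, cesNorm]
    congr 1
    exact tsum_congr fun n => by rw [hy k, norm_cesEmbed]
  have hnorm2 : ∀ k, cesNorm p (x k - z) = ‖y k - v‖ := by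
    intro k
    rw [lp.norm_eq_tsum_rpow hqt0 (y k - v), hqt, cesNorm]
    congr 1
    refine tsum_congr fun n => ?_
    have hco : ((y k - v : lp (cesTarget X) (ENNReal.ofReal p)) : ∀ n, cesTarget X n) n
        = cesEmbed (x k - z) n := by
      rw [lp.coeFn_sub, Pi.sub_apply, hy k, hvcoe, ← cesEmbed_sub]
    rw [hco, norm_cesEmbed]
  have hmain := lp_opial p hp (cesTarget X) hOpT y hweak v hvne
  rw [show (fun k => cesNorm p (x k)) = fun k => ‖y k‖ from funext hnorm1,
      show (fun k => cesNorm p (x k - z)) = fun k => ‖y k - v‖ from funext hnorm2]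
  exact hmain
end

section
/- Let 1 < p < ∞ and let (X_n)_{n≥1} be a sequence of real Banach spaces each of which has the nonstrict Opial property. Then the p-Cesàro sum [⊕_{n∈ℕ} X_n]_{ces_p} has the nonstrict Opial property: for every sequence (x^{(k)})_{k∈ℕ} in the Cesàro sum converging weakly to 0 (equivalently, via the isometric embedding S with (Sx)(n) = (1/n)(x_1,…,x_n), such that (S x^{(k)})_k converges weakly to 0 in the ℓ^p-sum [⊕_{n∈ℕ} (X_1 ⊕₁ ⋯ ⊕₁ X_n)]_p) and every x in the Cesàro sum, limsup_{k→∞} ‖x^{(k)}‖_{ces_p} ≤ limsup_{k→∞} ‖x^{(k)} − x‖_{ces_p}. -/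
open Filter
open scoped ENNReal Topology

/-- A real Banach space has the nonstrict Opial property if
`limsup ‖xₖ‖ ≤ limsup ‖xₖ − x‖` for every weakly null sequence `(xₖ)` and every `x`. -/
def NonstrictOpial (Y : Type*) [NormedAddCommGroup Y] [NormedSpace ℝ Y] : Prop :=
  ∀ u : ℕ → Y, (∀ φ : Y →L[ℝ] ℝ, Tendsto (fun k => φ (u k)) atTop (𝓝 0)) →
    ∀ x : Y, limsup (fun k => ‖u k‖) atTop ≤ limsup (fun k => ‖u k - x‖) atTop

set_option linter.unusedSectionVars false
section helpers
variable {X : ℕ → Type*} [∀ n, NormedAddCommGroup (X n)] [∀ n, NormedSpace ℝ (X n)]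

/-- The Cesàro averages. -/
noncomputable def cesC (x : ∀ n, X n) (n : ℕ) : ℝ :=
  (∑ i ∈ Finset.range (n + 1), ‖x i‖) / ((n : ℝ) + 1)

lemma cesC_nonneg (x : ∀ n, X n) (n : ℕ) : 0 ≤ cesC x n := by
  unfold cesC
  positivity

lemma cesNorm_eq (p : ℝ) (x : ∀ n, X n) : cesNorm p x = (∑' n, cesC x n ^ p) ^ (1/p) := rfl

lemma memCes_iff (p : ℝ) (x : ∀ n, X n) : MemCes p x ↔ Summable fun n => cesC x n ^ p :=
  Iff.rfl

lemma cesEmbed_norm (x : ∀ n, X n) (n : ℕ) : ‖cesEmbed x n‖ = cesC x n := by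
  have h1 : ((1 : ℝ≥0∞)).toReal = 1 := rfl
  rw [cesEmbed, norm_smul, PiLp.norm_eq_sum (by norm_num : (0:ℝ) < ((1:ℝ≥0∞)).toReal)]
  simp only [h1, Real.rpow_one, WithLp.equiv_symm_apply, PiLp.toLp_apply, WithLp.ofLp_toLp, one_div_one]
  rw [Real.norm_eq_abs, abs_of_nonneg (by positivity)]
  rw [Fin.sum_univ_eq_sum_range (fun i => ‖x i‖)]
  rw [cesC, div_eq_inv_mul]

end helpers

section coord
variable {X : ℕ → Type*} [∀ n, NormedAddCommGroup (X n)] [∀ n, NormedSpace ℝ (X n)]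
variable (q : ℝ≥0∞) [Fact (1 ≤ q)]

lemma piLp_one_apply_le {n : ℕ} (g : cesTarget X n) (j : Fin (n + 1)) : ‖g j‖ ≤ ‖g‖ := by
  rw [PiLp.norm_eq_sum (by norm_num : (0:ℝ) < ((1:ℝ≥0∞)).toReal)]
  have h1 : ((1 : ℝ≥0∞)).toReal = 1 := rfl
  simp only [h1, Real.rpow_one, one_div_one]
  exact Finset.single_le_sum (fun i _ => norm_nonneg _) (Finset.mem_univ j)

noncomputable def cesCoord (i : ℕ) : lp (cesTarget X) q →L[ℝ] X i :=
  LinearMap.mkContinuous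
    { toFun := fun f => (f : ∀ n, cesTarget X n) i (Fin.last i)
      map_add' := fun f g => by simp [lp.coeFn_add]
      map_smul' := fun c f => by simp [lp.coeFn_smul] }
    1 (fun f => by
      simp only [one_mul, LinearMap.coe_mk, AddHom.coe_mk]
      exact le_trans (piLp_one_apply_le _ _)
        (lp.norm_apply_le_norm (zero_lt_one.trans_le (Fact.out : (1:ℝ≥0∞) ≤ q)).ne' f i))

@[simp] lemma cesCoord_apply (i : ℕ) (f : lp (cesTarget X) q) :
    cesCoord q i f = (f : ∀ n, cesTarget X n) i (Fin.last i) := rfl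
end coord

section normlem
variable {X : ℕ → Type*} [∀ n, NormedAddCommGroup (X n)] [∀ n, NormedSpace ℝ (X n)]
variable {q : ℝ≥0∞} [Fact (1 ≤ q)] {p : ℝ}

lemma memℓp_cesEmbed (hq : q.toReal = p) {x : ∀ n, X n} (hx : MemCes p x) :
    Memℓp (cesEmbed x) q := by
  apply memℓp_gen
  have : (fun i => ‖cesEmbed x i‖ ^ q.toReal) = fun i => cesC x i ^ p := by
    ext i; rw [cesEmbed_norm, hq]
  rw [this]
  exact hx

lemma lp_norm_cesEmbed (hp : 0 < p) (hq : q.toReal = p) (f : lp (cesTarget X) q)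
    {x : ∀ n, X n} (hf : ∀ n, (f : ∀ n, cesTarget X n) n = cesEmbed x n) :
    ‖f‖ = cesNorm p x := by
  rw [lp.norm_eq_tsum_rpow (by rw [hq]; exact hp) f, cesNorm_eq]
  rw [hq]
  congr 1
  · exact tsum_congr fun n => by rw [hf n, cesEmbed_norm]
end normlem

section ces2
variable {X : ℕ → Type*} [∀ n, NormedAddCommGroup (X n)]

lemma cesC_le_add_left (x z : ∀ n, X n) (n : ℕ) :
    cesC x n ≤ cesC (x - z) n + cesC z n := by
  unfold cesC
  rw [← add_div, ← Finset.sum_add_distrib]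
  gcongr with i hi
  calc ‖x i‖ = ‖(x i - z i) + z i‖ := by rw [sub_add_cancel]
      _ ≤ ‖x i - z i‖ + ‖z i‖ := norm_add_le _ _
      _ = ‖(x - z) i‖ + ‖z i‖ := by rw [Pi.sub_apply]

lemma cesC_sub_le (x z : ∀ n, X n) (n : ℕ) :
    cesC (x - z) n ≤ cesC x n + cesC z n := by
  unfold cesC
  rw [← add_div, ← Finset.sum_add_distrib]
  gcongr with i hi
  calc ‖(x - z) i‖ = ‖x i - z i‖ := by rw [Pi.sub_apply]
      _ ≤ ‖x i‖ + ‖z i‖ := norm_sub_le _ _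
end ces2

set_option maxHeartbeats 1000000 in
/-- If `1 < p < ∞` and every `Xₙ` has the nonstrict Opial property, then the
`p`-Cesàro sum `[⊕ₙ Xₙ]_{ces_p}` has the nonstrict Opial property (weak convergence being
expressed via the isometric embedding `S` into the `ℓ^p`-sum `[⊕ₙ (X₁ ⊕₁ ⋯ ⊕₁ Xₙ)]_p`). -/
theorem stmt2 (p : ℝ) (hp : 1 < p) [Fact (1 ≤ ENNReal.ofReal p)]
    (X : ℕ → Type*) [∀ n, NormedAddCommGroup (X n)] [∀ n, NormedSpace ℝ (X n)]
    [∀ n, CompleteSpace (X n)]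
    (hOp : ∀ n, NonstrictOpial (X n))
    (x : ℕ → ∀ n, X n) (hxmem : ∀ k, MemCes p (x k))
    (y : ℕ → lp (cesTarget X) (ENNReal.ofReal p))
    (hy : ∀ k, (y k : ∀ n, cesTarget X n) = cesEmbed (x k))
    (hweak : ∀ φ : lp (cesTarget X) (ENNReal.ofReal p) →L[ℝ] ℝ,
      Tendsto (fun k => φ (y k)) atTop (𝓝 0))
    (z : ∀ n, X n) (hz : MemCes p z) :
    limsup (fun k => cesNorm p (x k)) atTop ≤ limsup (fun k => cesNorm p (x k - z)) atTop := by
  classical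
  have hp0 : (0:ℝ) < p := zero_lt_one.trans hp
  have hp1 : (1:ℝ) ≤ p := hp.le
  have hqt : (ENNReal.ofReal p).toReal = p := ENNReal.toReal_ofReal hp0.le
  set N : ℕ → ℝ := fun k => cesNorm p (x k) with hNdef
  set N' : ℕ → ℝ := fun k => cesNorm p (x k - z) with hN'def
  have hcnn : ∀ (v : ∀ n, X n) (n : ℕ), (0:ℝ) ≤ cesC v n ^ p :=
    fun v n => Real.rpow_nonneg (cesC_nonneg v n) p
  have htsum_nn : ∀ v : ∀ n, X n, (0:ℝ) ≤ ∑' n, cesC v n ^ p :=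
    fun v => tsum_nonneg fun n => hcnn v n
  have hNnn : ∀ k, 0 ≤ N k := fun k => Real.rpow_nonneg (htsum_nn _) _
  have hN'nn : ∀ k, 0 ≤ N' k := fun k => Real.rpow_nonneg (htsum_nn _) _
  have hzsum : Summable fun n => cesC z n ^ p := hz
  have hxsum : ∀ k, Summable fun n => cesC (x k) n ^ p := hxmem
  have hrip : ∀ s : ℝ, 0 ≤ s → (s ^ (1/p)) ^ p = s := fun s hs => by
    rw [one_div]; exact Real.rpow_inv_rpow hs hp0.ne'
  have hrpi : ∀ s : ℝ, 0 ≤ s → (s ^ p) ^ (1/p) = s := fun s hs => by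
    rw [one_div]; exact Real.rpow_rpow_inv hs hp0.ne'
  have hsub : ∀ k, Summable fun n => cesC (x k - z) n ^ p := fun k =>
    Summable.of_nonneg_of_le (fun n => hcnn _ n)
      (fun n => Real.rpow_le_rpow (cesC_nonneg _ n) (cesC_sub_le (x k) z n) hp0.le)
      (Real.summable_Lp_add_of_nonneg hp1 (fun n => cesC_nonneg _ n)
        (fun n => cesC_nonneg _ n) (hxsum k) hzsum)
  have hyk : ∀ k, ‖y k‖ = N k := fun k =>
    lp_norm_cesEmbed hp0 hqt (y k) (fun n => by rw [hy k])
  -- boundedness via Banach–Steinhaus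
  obtain ⟨C, hCnn, hC⟩ : ∃ C, 0 ≤ C ∧ ∀ k, N k ≤ C := by
    have hb : ∀ ξ : StrongDual ℝ (lp (cesTarget X) (ENNReal.ofReal p)), ∃ Cξ, ∀ k : ℕ,
        ‖(NormedSpace.inclusionInDoubleDual ℝ (lp (cesTarget X) (ENNReal.ofReal p)) (y k)) ξ‖ ≤ Cξ := by
      intro ξ
      have h1 : Tendsto (fun k => ‖ξ (y k)‖) atTop (𝓝 ‖(0:ℝ)‖) := (hweak ξ).norm
      obtain ⟨Cξ, hCξ⟩ := h1.bddAbove_range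
      exact ⟨Cξ, fun k => by
        simpa [NormedSpace.dual_def] using hCξ (Set.mem_range_self (f := fun k => ‖ξ (y k)‖) k)⟩
    obtain ⟨C', hC'⟩ := banach_steinhaus hb
    refine ⟨max C' 0, le_max_right _ _, fun k => ?_⟩
    have h2 : ‖y k‖ = ‖NormedSpace.inclusionInDoubleDual ℝ (lp (cesTarget X) (ENNReal.ofReal p)) (y k)‖ :=
      ((NormedSpace.inclusionInDoubleDualLi ℝ (E := lp (cesTarget X) (ENNReal.ofReal p))).norm_map (y k)).symm
    calc N k = ‖y k‖ := (hyk k).symm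
      _ = _ := h2
      _ ≤ C' := hC' k
      _ ≤ max C' 0 := le_max_left _ _
  -- weakly null coordinates
  have hwn : ∀ (i : ℕ) (φ' : X i →L[ℝ] ℝ), Tendsto (fun k => φ' (x k i)) atTop (𝓝 0) := by
    intro i φ'
    have hi0 : ((i:ℝ) + 1) ≠ 0 := by positivity
    have hco : ∀ k, cesCoord (X := X) (ENNReal.ofReal p) i (y k) = ((i:ℝ) + 1)⁻¹ • x k i := by
      intro k
      rw [cesCoord_apply, hy k]
      show (((i:ℝ)+1)⁻¹ • (WithLp.equiv 1 _).symm (fun j => x k j)) (Fin.last i) = _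
      rw [PiLp.smul_apply, WithLp.equiv_symm_apply]
      rfl
    have h2 := hweak (((i:ℝ)+1) • (φ'.comp (cesCoord (X := X) (ENNReal.ofReal p) i)))
    have h3 : (fun k => ((((i:ℝ)+1) • (φ'.comp (cesCoord (X := X) (ENNReal.ofReal p) i))) (y k)))
        = fun k => φ' (x k i) := by
      funext k
      simp only [ContinuousLinearMap.smul_apply, ContinuousLinearMap.comp_apply, hco k,
        map_smul, smul_eq_mul]
      field_simp
    rwa [h3] at h2
  -- cesC bounded by cesNorm
  have hcle : ∀ (v : ∀ n, X n), (Summable fun n => cesC v n ^ p) →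
      ∀ n, cesC v n ≤ cesNorm p v := by
    intro v hv n
    have h1 : cesC v n ^ p ≤ ∑' m, cesC v m ^ p := Summable.le_tsum hv n fun m _ => hcnn v m
    calc cesC v n = (cesC v n ^ p) ^ (1/p) := (hrpi _ (cesC_nonneg v n)).symm
      _ ≤ (∑' m, cesC v m ^ p) ^ (1/p) :=
          Real.rpow_le_rpow (hcnn v n) h1 (by positivity)
      _ = cesNorm p v := (cesNorm_eq p v).symm
  have hzn : 0 ≤ cesNorm p z := Real.rpow_nonneg (htsum_nn z) _
  have hN'le : ∀ k, N' k ≤ C + cesNorm p z := by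
    intro k
    have h2 : N' k ≤ N k + cesNorm p z := by
      have h3 : (∑' n, cesC (x k - z) n ^ p) ≤ ∑' n, (cesC (x k) n + cesC z n) ^ p :=
        Summable.tsum_le_tsum (fun n => Real.rpow_le_rpow (cesC_nonneg _ n) (cesC_sub_le (x k) z n) hp0.le)
          (hsub k)
          (Real.summable_Lp_add_of_nonneg hp1 (fun n => cesC_nonneg _ n)
            (fun n => cesC_nonneg _ n) (hxsum k) hzsum)
      calc N' k = (∑' n, cesC (x k - z) n ^ p) ^ (1/p) := by rw [hN'def]; exact cesNorm_eq p _
        _ ≤ (∑' n, (cesC (x k) n + cesC z n) ^ p) ^ (1/p) :=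
            Real.rpow_le_rpow (htsum_nn _) h3 (by positivity)
        _ ≤ (∑' n, cesC (x k) n ^ p) ^ (1/p) + (∑' n, cesC z n ^ p) ^ (1/p) :=
            Real.Lp_add_le_tsum_of_nonneg' hp1 (fun n => cesC_nonneg _ n)
              (fun n => cesC_nonneg _ n) (hxsum k) hzsum
        _ = N k + cesNorm p z := by rw [hNdef]; rfl
    linarith [hC k]
  set M : ℝ := limsup N atTop with hMdef
  set L : ℝ := limsup N' atTop with hLdef
  have hbddN' : IsBoundedUnder (· ≤ ·) atTop N' :=
    isBoundedUnder_of ⟨C + cesNorm p z, fun k => hN'le k⟩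
  have hbddN : IsBoundedUnder (· ≤ ·) atTop N := isBoundedUnder_of ⟨C, hC⟩
  have hLnn : (0:ℝ) ≤ L :=
    le_limsup_of_frequently_le (Frequently.of_forall fun k => hN'nn k) hbddN'
  have key : ∀ ε : ℝ, 0 < ε → M ≤ L + (ε + ε) := by
    intro ε hε
    obtain ⟨K, hK⟩ : ∃ K : ℕ, ∑' n, cesC z (n + K) ^ p ≤ ε ^ p := by
      have h1 : Tendsto (fun K => ∑ n ∈ Finset.range K, cesC z n ^ p) atTop
          (𝓝 (∑' n, cesC z n ^ p)) := hzsum.hasSum.tendsto_sum_nat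
      have h2 : Tendsto (fun K => (∑' n, cesC z n ^ p) - ∑ n ∈ Finset.range K, cesC z n ^ p)
          atTop (𝓝 ((∑' n, cesC z n ^ p) - ∑' n, cesC z n ^ p)) := tendsto_const_nhds.sub h1
      rw [sub_self] at h2
      obtain ⟨K, hK3⟩ := (h2.eventually_lt_const (show (0:ℝ) < ε ^ p by positivity)).exists
      have h4 := Summable.sum_add_tsum_nat_add K hzsum
      exact ⟨K, by linarith⟩
    have htailz : Summable fun n => cesC z (n + K) ^ p := (summable_nat_add_iff K).mpr hzsum
    have htailx : ∀ k, Summable fun n => cesC (x k) (n + K) ^ p :=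
      fun k => (summable_nat_add_iff K).mpr (hxsum k)
    have htails : ∀ k, Summable fun n => cesC (x k - z) (n + K) ^ p :=
      fun k => (summable_nat_add_iff K).mpr (hsub k)
    set εz : ℝ := (∑' n, cesC z (n + K) ^ p) ^ (1/p) with hεzdef
    have hεznn : 0 ≤ εz := Real.rpow_nonneg (tsum_nonneg fun n => hcnn z _) _
    have hεzle : εz ≤ ε := by
      calc εz ≤ (ε ^ p) ^ (1/p) :=
          Real.rpow_le_rpow (tsum_nonneg fun n => hcnn z _) hK (by positivity)
        _ = ε := hrpi ε hε.le
    have hgebdd : IsBoundedUnder (· ≥ ·) atTop N := isBoundedUnder_of ⟨0, fun k => hNnn k⟩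
    have hfreq : ∃ᶠ k in atTop, M - ε < N k :=
      frequently_lt_of_lt_limsup hgebdd.isCoboundedUnder_le (sub_lt_self M hε)
    obtain ⟨ψ, hψm, hψ⟩ := extraction_of_frequently_atTop hfreq
    set Tail : ℕ → ℝ := fun k => (∑' n, cesC (x k) (n + K) ^ p) ^ (1/p) with hTaildef
    have hTailnn : ∀ k, 0 ≤ Tail k :=
      fun k => Real.rpow_nonneg (tsum_nonneg fun n => hcnn _ _) _
    have hTail_le : ∀ k, Tail k ≤ N k := by
      intro k
      have h6 := Summable.sum_add_tsum_nat_add K (hxsum k)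
      have h7 : 0 ≤ ∑ n ∈ Finset.range K, cesC (x k) n ^ p :=
        Finset.sum_nonneg fun n _ => hcnn _ _
      have h5 : (∑' n, cesC (x k) (n + K) ^ p) ≤ ∑' n, cesC (x k) n ^ p := by linarith
      calc Tail k ≤ (∑' n, cesC (x k) n ^ p) ^ (1/p) :=
            Real.rpow_le_rpow (tsum_nonneg fun n => hcnn _ _) h5 (by positivity)
        _ = N k := rfl
    have hKc : (0:ℝ) ≤ (K:ℝ) := Nat.cast_nonneg K
    have hxbd : ∀ (k i : ℕ), i < K → ‖x k i‖ ≤ (K:ℝ) * C := by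
      intro k i hi
      have h8 : ‖x k i‖ ≤ ∑ j ∈ Finset.range (i+1), ‖x k j‖ :=
        Finset.single_le_sum (f := fun j => ‖x k j‖) (fun j _ => norm_nonneg _)
          (Finset.self_mem_range_succ i)
      have h9 : (∑ j ∈ Finset.range (i+1), ‖x k j‖) = ((i:ℝ)+1) * cesC (x k) i := by
        rw [cesC]; field_simp
      have h10 : cesC (x k) i ≤ C := (hcle _ (hxsum k) i).trans (hC k)
      have h11 : ((i:ℝ)+1) ≤ (K:ℝ) := by exact_mod_cast hi
      nlinarith [cesC_nonneg (x k) i]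
    have hzbd : ∀ i : ℕ, i < K → ‖z i‖ ≤ (K:ℝ) * cesNorm p z := by
      intro i hi
      have h8 : ‖z i‖ ≤ ∑ j ∈ Finset.range (i+1), ‖z j‖ :=
        Finset.single_le_sum (f := fun j => ‖z j‖) (fun j _ => norm_nonneg _)
          (Finset.self_mem_range_succ i)
      have h9 : (∑ j ∈ Finset.range (i+1), ‖z j‖) = ((i:ℝ)+1) * cesC z i := by
        rw [cesC]; field_simp
      have h10 : cesC z i ≤ cesNorm p z := hcle _ hzsum i
      have h11 : ((i:ℝ)+1) ≤ (K:ℝ) := by exact_mod_cast hi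
      nlinarith [cesC_nonneg z i]
    set R : ℝ := (K:ℝ) * C + (K:ℝ) * cesNorm p z + C + cesNorm p z with hRdef
    have hKC : 0 ≤ (K:ℝ) * C := mul_nonneg hKc hCnn
    have hKz : 0 ≤ (K:ℝ) * cesNorm p z := mul_nonneg hKc hzn
    have hRnn : 0 ≤ R := by positivity
    set V : ℕ → (Fin K → ℝ) × (Fin K → ℝ) × ℝ × ℝ × ℝ := fun k =>
      (fun i => ‖x (ψ k) (i:ℕ)‖, fun i => ‖x (ψ k) (i:ℕ) - z (i:ℕ)‖,
        N (ψ k), N' (ψ k), Tail (ψ k)) with hVdef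
    have hVmem : ∀ k, V k ∈ Metric.closedBall (0 : (Fin K → ℝ) × (Fin K → ℝ) × ℝ × ℝ × ℝ) R := by
      intro k
      rw [Metric.mem_closedBall, dist_zero_right]
      have e1 : ‖(V k).1‖ ≤ R := by
        rw [pi_norm_le_iff_of_nonneg hRnn]
        intro i
        rw [Real.norm_eq_abs, abs_of_nonneg (norm_nonneg _)]
        have := hxbd (ψ k) i i.isLt
        linarith
      have e2 : ‖(V k).2.1‖ ≤ R := by
        rw [pi_norm_le_iff_of_nonneg hRnn]
        intro i
        rw [Real.norm_eq_abs, abs_of_nonneg (norm_nonneg _)]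
        have h1 : ‖x (ψ k) (i:ℕ) - z (i:ℕ)‖ ≤ ‖x (ψ k) (i:ℕ)‖ + ‖z (i:ℕ)‖ := norm_sub_le _ _
        have h2 := hxbd (ψ k) i i.isLt
        have h3 := hzbd i i.isLt
        linarith
      have e3 : ‖(V k).2.2.1‖ ≤ R := by
        rw [Real.norm_eq_abs, abs_of_nonneg (hNnn _)]
        have := hC (ψ k); linarith
      have e4 : ‖(V k).2.2.2.1‖ ≤ R := by
        rw [Real.norm_eq_abs, abs_of_nonneg (hN'nn _)]
        have := hN'le (ψ k); linarith
      have e5 : ‖(V k).2.2.2.2‖ ≤ R := by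
        rw [Real.norm_eq_abs, abs_of_nonneg (hTailnn _)]
        have := (hTail_le (ψ k)).trans (hC (ψ k)); linarith
      calc ‖V k‖ = max ‖(V k).1‖ (max ‖(V k).2.1‖ (max ‖(V k).2.2.1‖
            (max ‖(V k).2.2.2.1‖ ‖(V k).2.2.2.2‖))) := by
            simp [Prod.norm_def]
        _ ≤ R := by
            exact max_le e1 (max_le e2 (max_le e3 (max_le e4 e5)))
    obtain ⟨lim, -, φ, hφm, hφ⟩ := (isCompact_closedBall
      (0 : (Fin K → ℝ) × (Fin K → ℝ) × ℝ × ℝ × ℝ) R).tendsto_subseq hVmem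
    obtain ⟨a, b, m, l, t⟩ := lim
    set σ : ℕ → ℕ := ψ ∘ φ with hσdef
    have hσm : StrictMono σ := hψm.comp hφm
    have hσtop : Tendsto σ atTop atTop := hσm.tendsto_atTop
    have ha : ∀ i : Fin K, Tendsto (fun k => ‖x (σ k) (i:ℕ)‖) atTop (𝓝 (a i)) := by
      intro i
      exact ((continuous_apply i).comp continuous_fst).continuousAt.tendsto.comp hφ
    have hb : ∀ i : Fin K, Tendsto (fun k => ‖x (σ k) (i:ℕ) - z (i:ℕ)‖) atTop (𝓝 (b i)) := by
      intro i
      exact ((continuous_apply i).comp (continuous_fst.comp continuous_snd)).continuousAt.tendsto.comp hφ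
    have hNσ : Tendsto (fun k => N (σ k)) atTop (𝓝 m) :=
      (continuous_fst.comp (continuous_snd.comp continuous_snd)).continuousAt.tendsto.comp hφ
    have hN'σ : Tendsto (fun k => N' (σ k)) atTop (𝓝 l) :=
      (continuous_fst.comp (continuous_snd.comp
        (continuous_snd.comp continuous_snd))).continuousAt.tendsto.comp hφ
    have hTσ : Tendsto (fun k => Tail (σ k)) atTop (𝓝 t) :=
      (continuous_snd.comp (continuous_snd.comp
        (continuous_snd.comp continuous_snd))).continuousAt.tendsto.comp hφ
    have hm0 : 0 ≤ m := ge_of_tendsto' hNσ fun k => hNnn _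
    have hl0 : 0 ≤ l := ge_of_tendsto' hN'σ fun k => hN'nn _
    have ht0 : 0 ≤ t := ge_of_tendsto' hTσ fun k => hTailnn _
    have hmM : M - ε ≤ m := ge_of_tendsto' hNσ fun k => (hψ (φ k)).le
    have hlL : l ≤ L := by
      refine le_of_forall_pos_le_add fun η hη => ?_
      have h1 : ∀ᶠ k in atTop, N' k < L + η :=
        eventually_lt_of_limsup_lt (by linarith) hbddN'
      have h2 : ∀ᶠ k in atTop, N' (σ k) < L + η := hσtop.eventually h1
      exact le_of_tendsto hN'σ (h2.mono fun k hk => hk.le)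
    have hab : ∀ i : Fin K, a i ≤ b i := by
      intro i
      have hu : ∀ φ'' : X (i:ℕ) →L[ℝ] ℝ,
          Tendsto (fun k => φ'' (x (σ k) (i:ℕ))) atTop (𝓝 0) :=
        fun φ'' => (hwn i φ'').comp hσtop
      have h2 := hOp i (fun k => x (σ k) (i:ℕ)) hu (z i)
      rwa [(ha i).limsup_eq, (hb i).limsup_eq] at h2
    set A : ℕ → ℝ := fun i => if h : i < K then a ⟨i, h⟩ else 0 with hAdef
    set B : ℕ → ℝ := fun i => if h : i < K then b ⟨i, h⟩ else 0 with hBdef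
    have hAnn : ∀ i, 0 ≤ A i := by
      intro i; rw [hAdef]; dsimp only; split
      · exact ge_of_tendsto' (ha _) fun k => norm_nonneg _
      · exact le_refl 0
    have hBnn : ∀ i, 0 ≤ B i := by
      intro i; rw [hBdef]; dsimp only; split
      · exact ge_of_tendsto' (hb _) fun k => norm_nonneg _
      · exact le_refl 0
    have hABle : ∀ i, A i ≤ B i := by
      intro i; rw [hAdef, hBdef]; dsimp only; split
      · exact hab _
      · exact le_refl 0
    have hAten : ∀ (i : ℕ), i < K → Tendsto (fun k => ‖x (σ k) i‖) atTop (𝓝 (A i)) := by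
      intro i h; rw [hAdef]; dsimp only; rw [dif_pos h]; exact ha ⟨i, h⟩
    have hBten : ∀ (i : ℕ), i < K →
        Tendsto (fun k => ‖x (σ k) i - z i‖) atTop (𝓝 (B i)) := by
      intro i h; rw [hBdef]; dsimp only; rw [dif_pos h]; exact hb ⟨i, h⟩
    set α : ℕ → ℝ := fun n => (∑ i ∈ Finset.range (n+1), A i) / ((n:ℝ)+1) with hαdef
    set β : ℕ → ℝ := fun n => (∑ i ∈ Finset.range (n+1), B i) / ((n:ℝ)+1) with hβdef
    have hαnn : ∀ n, 0 ≤ α n := by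
      intro n; rw [hαdef]; dsimp only
      have := Finset.sum_nonneg (fun i (_ : i ∈ Finset.range (n+1)) => hAnn i)
      positivity
    have hαβ : ∀ n, α n ≤ β n := by
      intro n; rw [hαdef, hβdef]; dsimp only
      gcongr with i hi
      exact hABle i
    have hcα : ∀ n, n < K → Tendsto (fun k => cesC (x (σ k)) n) atTop (𝓝 (α n)) := by
      intro n hn
      have h1 : Tendsto (fun k => ∑ i ∈ Finset.range (n+1), ‖x (σ k) i‖) atTop
          (𝓝 (∑ i ∈ Finset.range (n+1), A i)) :=
        tendsto_finset_sum _ fun i hi =>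
          hAten i (lt_of_le_of_lt (Nat.lt_succ_iff.mp (Finset.mem_range.mp hi)) hn)
      exact h1.div_const ((n:ℝ)+1)
    have hcβ : ∀ n, n < K → Tendsto (fun k => cesC (x (σ k) - z) n) atTop (𝓝 (β n)) := by
      intro n hn
      have h1 : Tendsto (fun k => ∑ i ∈ Finset.range (n+1), ‖x (σ k) i - z i‖) atTop
          (𝓝 (∑ i ∈ Finset.range (n+1), B i)) :=
        tendsto_finset_sum _ fun i hi =>
          hBten i (lt_of_le_of_lt (Nat.lt_succ_iff.mp (Finset.mem_range.mp hi)) hn)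
      have h2 : (fun k => cesC (x (σ k) - z) n)
          = fun k => (∑ i ∈ Finset.range (n+1), ‖x (σ k) i - z i‖) / ((n:ℝ)+1) := by
        funext k; rw [cesC]; simp [Pi.sub_apply]
      rw [h2]
      exact h1.div_const ((n:ℝ)+1)
    have hrt : ∀ {u : ℕ → ℝ} {s : ℝ}, Tendsto u atTop (𝓝 s) →
        Tendsto (fun k => u k ^ p) atTop (𝓝 (s ^ p)) :=
      fun h => ((Real.continuousAt_rpow_const _ p (Or.inr hp0.le)).tendsto).comp h
    have hHd : Tendsto (fun k => ∑ n ∈ Finset.range K, cesC (x (σ k)) n ^ p) atTop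
        (𝓝 (∑ n ∈ Finset.range K, α n ^ p)) :=
      tendsto_finset_sum _ fun n hn => hrt (hcα n (Finset.mem_range.mp hn))
    have hHd' : Tendsto (fun k => ∑ n ∈ Finset.range K, cesC (x (σ k) - z) n ^ p) atTop
        (𝓝 (∑ n ∈ Finset.range K, β n ^ p)) :=
      tendsto_finset_sum _ fun n hn => hrt (hcβ n (Finset.mem_range.mp hn))
    have hsplit : ∀ (v : ∀ n, X n), (Summable fun n => cesC v n ^ p) →
        cesNorm p v ^ p = (∑ n ∈ Finset.range K, cesC v n ^ p) + ∑' n, cesC v (n + K) ^ p := by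
      intro v hv
      rw [cesNorm_eq, hrip _ (htsum_nn v)]
      exact (Summable.sum_add_tsum_nat_add K hv).symm
    have hNp : ∀ k, N k ^ p = (∑ n ∈ Finset.range K, cesC (x k) n ^ p) + Tail k ^ p := by
      intro k
      have h1 : Tail k ^ p = ∑' n, cesC (x k) (n + K) ^ p :=
        hrip _ (tsum_nonneg fun n => hcnn _ _)
      rw [h1]
      exact hsplit (x k) (hxsum k)
    have hmp : m ^ p = (∑ n ∈ Finset.range K, α n ^ p) + t ^ p := by
      have h1 : Tendsto (fun k => N (σ k) ^ p) atTop (𝓝 (m ^ p)) := hrt hNσ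
      have h2 : Tendsto (fun k => N (σ k) ^ p) atTop
          (𝓝 ((∑ n ∈ Finset.range K, α n ^ p) + t ^ p)) :=
        Tendsto.congr (fun k => (hNp (σ k)).symm) (hHd.add (hrt hTσ))
      exact tendsto_nhds_unique h1 h2
    have htkey : ∀ k, (max (Tail k - εz) 0) ^ p ≤ ∑' n, cesC (x k - z) (n + K) ^ p := by
      intro k
      have hS : 0 ≤ (∑' n, cesC (x k - z) (n + K) ^ p) ^ (1/p) :=
        Real.rpow_nonneg (tsum_nonneg fun n => hcnn _ _) _
      have h1 : Tail k ≤ (∑' n, cesC (x k - z) (n + K) ^ p) ^ (1/p) + εz := by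
        have hmono : (∑' n, cesC (x k) (n + K) ^ p) ≤
            ∑' n, (cesC (x k - z) (n + K) + cesC z (n + K)) ^ p :=
          Summable.tsum_le_tsum
            (fun n => Real.rpow_le_rpow (cesC_nonneg _ _)
              (cesC_le_add_left (x k) z (n+K)) hp0.le)
            (htailx k)
            (Real.summable_Lp_add_of_nonneg hp1 (fun n => cesC_nonneg _ _)
              (fun n => cesC_nonneg _ _) (htails k) htailz)
        calc Tail k ≤ (∑' n, (cesC (x k - z) (n + K) + cesC z (n + K)) ^ p) ^ (1/p) :=
              Real.rpow_le_rpow (tsum_nonneg fun n => hcnn _ _) hmono (by positivity)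
          _ ≤ (∑' n, cesC (x k - z) (n + K) ^ p) ^ (1/p)
              + (∑' n, cesC z (n + K) ^ p) ^ (1/p) :=
              Real.Lp_add_le_tsum_of_nonneg' hp1 (fun n => cesC_nonneg _ _)
                (fun n => cesC_nonneg _ _) (htails k) htailz
      have h2 : max (Tail k - εz) 0 ≤ (∑' n, cesC (x k - z) (n + K) ^ p) ^ (1/p) :=
        max_le (by linarith) hS
      calc (max (Tail k - εz) 0) ^ p
          ≤ ((∑' n, cesC (x k - z) (n + K) ^ p) ^ (1/p)) ^ p :=
            Real.rpow_le_rpow (le_max_right _ _) h2 hp0.le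
        _ = _ := hrip _ (tsum_nonneg fun n => hcnn _ _)
    have hN'p_ge : ∀ k, (∑ n ∈ Finset.range K, cesC (x k - z) n ^ p)
        + (max (Tail k - εz) 0) ^ p ≤ N' k ^ p := by
      intro k
      have h1 : N' k ^ p = (∑ n ∈ Finset.range K, cesC (x k - z) n ^ p)
          + ∑' n, cesC (x k - z) (n + K) ^ p := hsplit (x k - z) (hsub k)
      have h2 := htkey k
      linarith
    have hlp : (∑ n ∈ Finset.range K, β n ^ p) + (max (t - εz) 0) ^ p ≤ l ^ p := by
      have h1 : Tendsto (fun k => (∑ n ∈ Finset.range K, cesC (x (σ k) - z) n ^ p)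
          + (max (Tail (σ k) - εz) 0) ^ p) atTop
          (𝓝 ((∑ n ∈ Finset.range K, β n ^ p) + (max (t - εz) 0) ^ p)) :=
        hHd'.add (hrt ((hTσ.sub_const εz).max tendsto_const_nhds))
      exact le_of_tendsto_of_tendsto' h1 (hrt hN'σ) fun k => hN'p_ge (σ k)
    have hHH : (∑ n ∈ Finset.range K, α n ^ p) ≤ ∑ n ∈ Finset.range K, β n ^ p :=
      Finset.sum_le_sum fun n _ => Real.rpow_le_rpow (hαnn n) (hαβ n) hp0.le
    set s : ℝ := max (t - εz) 0 with hsdef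
    have hs0 : 0 ≤ s := le_max_right _ _
    have hts : t ≤ s + εz := by
      have h1 : t - εz ≤ s := le_max_left _ _
      linarith
    set H : ℝ := ∑ n ∈ Finset.range K, α n ^ p with hHdef
    have hH0 : 0 ≤ H :=
      Finset.sum_nonneg fun n _ => Real.rpow_nonneg (hαnn n) _
    have hmle : m ^ p ≤ H + (s + εz) ^ p := by
      rw [hmp]
      exact add_le_add_right (Real.rpow_le_rpow ht0 hts hp0.le) H
    have hmink : (H + (s + εz) ^ p) ^ (1/p) ≤ (H + s ^ p) ^ (1/p) + εz := by
      have h2 := Real.Lp_add_le (Finset.univ : Finset (Fin 2)) ![H ^ (1/p), s] ![0, εz] hp1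
      have e1 : (∑ i : Fin 2, |(![H ^ (1/p), s] i) + (![0, εz] i)| ^ p)
          = H + (s + εz) ^ p := by
        rw [Fin.sum_univ_two]
        simp only [Matrix.cons_val_zero, Matrix.cons_val_one, Matrix.head_cons]
        rw [add_zero, abs_of_nonneg (Real.rpow_nonneg hH0 _),
          abs_of_nonneg (by positivity : (0:ℝ) ≤ s + εz), hrip _ hH0]
      have e2 : (∑ i : Fin 2, |![H ^ (1/p), s] i| ^ p) = H + s ^ p := by
        rw [Fin.sum_univ_two]
        simp only [Matrix.cons_val_zero, Matrix.cons_val_one, Matrix.head_cons]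
        rw [abs_of_nonneg (Real.rpow_nonneg hH0 _), abs_of_nonneg hs0, hrip _ hH0]
      have e3 : (∑ i : Fin 2, |![(0:ℝ), εz] i| ^ p) = εz ^ p := by
        rw [Fin.sum_univ_two]
        simp only [Matrix.cons_val_zero, Matrix.cons_val_one, Matrix.head_cons]
        rw [abs_zero, abs_of_nonneg hεznn, Real.zero_rpow hp0.ne', zero_add]
      rw [e1, e2, e3, hrpi _ hεznn] at h2
      exact h2
    have hml : m ≤ l + εz := by
      have hc1 : m = (m ^ p) ^ (1/p) := (hrpi m hm0).symm
      have hc2 : (m ^ p) ^ (1/p) ≤ (H + (s + εz) ^ p) ^ (1/p) :=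
        Real.rpow_le_rpow (Real.rpow_nonneg hm0 p) hmle (by positivity)
      have hc3 : (H + s ^ p) ^ (1/p) ≤ (l ^ p) ^ (1/p) := by
        apply Real.rpow_le_rpow (by positivity) _ (by positivity)
        linarith
      have hc4 : (l ^ p) ^ (1/p) = l := hrpi l hl0
      calc m = (m ^ p) ^ (1/p) := hc1
        _ ≤ (H + (s + εz) ^ p) ^ (1/p) := hc2
        _ ≤ (H + s ^ p) ^ (1/p) + εz := hmink
        _ ≤ (l ^ p) ^ (1/p) + εz := by linarith
        _ = l + εz := by rw [hc4]
    linarith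
  refine le_of_forall_pos_le_add fun ε hε => ?_
  have h := key (ε/2) (by positivity)
  calc M ≤ L + (ε/2 + ε/2) := h
    _ = L + ε := by ring_nf
end

section
/- Let 1 < p < ∞ and let (X_n)_{n≥1} be a sequence of real Banach spaces each of which has the Schur property. Then the p-Cesàro sum [⊕_{n∈ℕ} X_n]_{ces_p} has the uniform Opial property: for all ε > 0 and R > 0 there exists η > 0 such that for every x in the Cesàro sum with ‖x‖_{ces_p} ≥ ε and every sequence (x^{(k)}) in the Cesàro sum converging weakly to 0 with limsup_{k→∞} ‖x^{(k)}‖_{ces_p} ≤ R, one has η + liminf_{k→∞} ‖x^{(k)}‖_{ces_p} ≤ liminf_{k→∞} ‖x^{(k)} − x‖_{ces_p}. -/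
open Filter
open scoped ENNReal Topology

/-- A real Banach space has the Schur property if every weakly convergent sequence
converges in norm. -/
def SchurProp (Y : Type*) [NormedAddCommGroup Y] [NormedSpace ℝ Y] : Prop :=
  ∀ (u : ℕ → Y) (l : Y),
    (∀ φ : Y →L[ℝ] ℝ, Tendsto (fun k => φ (u k)) atTop (𝓝 (φ l))) →
    Tendsto u atTop (𝓝 l)


set_option maxHeartbeats 1600000
set_option linter.unusedSectionVars false
set_option linter.unusedVariables false


private lemma tail_tendsto {f : ℕ → ℝ} (h : Summable f) :
    Tendsto (fun i => ∑' k, f (k + i)) atTop (𝓝 0) := by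
  have h1 := h.hasSum.tendsto_sum_nat
  have he : (fun i => ∑' k, f (k + i)) = fun i => (∑' k, f k) - ∑ k ∈ Finset.range i, f k := by
    funext i; have := Summable.sum_add_tsum_nat_add (f := f) i h; linarith
  rw [he]
  simpa using (tendsto_const_nhds (x := ∑' k, f k)).sub h1

private lemma core {p : ℝ} (hp : 1 < p) {a : ℕ → ℕ → ℝ} {b : ℕ → ℝ} {β : ℕ → ℝ} {C Cα : ℝ}
    (ha0 : ∀ k n, 0 ≤ a k n) (hb0 : ∀ n, 0 ≤ b n)
    (hasum : ∀ k, Summable fun n => a k n ^ p) (hbsum : Summable fun n => b n ^ p)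
    (hpt : ∀ n, Tendsto (fun k => a k n) atTop (𝓝 0))
    (hαbd : ∀ k, (∑' n, a k n ^ p) ^ (1/p) ≤ Cα)
    (hβ : ∀ k, (∑' n, |a k n - b n| ^ p) ^ (1/p) ≤ β k)
    (hβbd : ∀ k, β k ≤ C) :
    ((liminf (fun k => (∑' n, a k n ^ p) ^ (1/p)) atTop) ^ p + ∑' n, b n ^ p) ^ (1/p)
      ≤ liminf β atTop := by
  have hp0 : (0:ℝ) < p := lt_trans one_pos hp
  have hp0' : p ≠ 0 := ne_of_gt hp0
  have h1p : (0:ℝ) < 1/p := by positivity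
  set α : ℕ → ℝ := fun k => (∑' n, a k n ^ p) ^ (1/p) with hα
  have hα0 : ∀ k, 0 ≤ α k := fun k =>
    Real.rpow_nonneg (tsum_nonneg fun n => Real.rpow_nonneg (ha0 k n) p) _
  set B : ℝ := ∑' n, b n ^ p with hB
  have hB0 : 0 ≤ B := tsum_nonneg fun n => Real.rpow_nonneg (hb0 n) p
  set L : ℝ := liminf α atTop with hLdef
  have hβcob : IsCoboundedUnder (· ≥ ·) atTop β :=
    (isBoundedUnder_of ⟨C, fun k => hβbd k⟩).isCoboundedUnder_ge
  have hαcob : IsCoboundedUnder (· ≥ ·) atTop α :=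
    (isBoundedUnder_of ⟨Cα, fun k => hαbd k⟩).isCoboundedUnder_ge
  have hL0 : 0 ≤ L :=
    le_liminf_of_le hαcob (Eventually.of_forall fun k => hα0 k)
  set u1 : ℝ → ℝ := fun δ => max (L - δ) 0 with hu1
  set u2 : ℝ → ℝ := fun δ => max (u1 δ ^ p - δ) 0 with hu2
  set u3 : ℝ → ℝ := fun δ => max (u2 δ ^ (1/p) - δ) 0 with hu3
  set W : ℝ → ℝ := fun δ => B - δ ^ p - δ + u3 δ ^ p with hW
  set Φ : ℝ → ℝ := fun δ => (max (W δ) 0) ^ (1/p) with hΦ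
  have hu10 : u1 0 = L := by simp [hu1, hL0]
  have hu20 : u2 0 = L ^ p := by simp [hu2, hu10, Real.rpow_nonneg hL0 p]
  have hLp : (L ^ p) ^ (1/p) = L := by
    rw [← Real.rpow_mul hL0, mul_one_div_cancel hp0', Real.rpow_one]
  have hu30 : u3 0 = L := by
    rw [hu3]
    show max (u2 0 ^ (1/p) - 0) 0 = L
    rw [hu20, sub_zero, hLp]
    exact max_eq_left hL0
  have hW0 : W 0 = B + L ^ p := by
    simp [hW, hu30, Real.zero_rpow hp0']
  have hΦ0 : Φ 0 = (L ^ p + B) ^ (1/p) := by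
    rw [hΦ]
    show (max (W 0) 0) ^ (1/p) = (L ^ p + B) ^ (1/p)
    rw [hW0, max_eq_left (add_nonneg hB0 (Real.rpow_nonneg hL0 p)), add_comm]
  have claim1 : ∀ δ : ℝ, 0 < δ → Φ δ ≤ liminf β atTop := by
    intro δ hδ
    have hδp : (0:ℝ) < δ ^ p := Real.rpow_pos_of_pos hδ p
    obtain ⟨N, hN⟩ : ∃ N, ∑' n, b (n + N) ^ p < δ ^ p :=
      ((tail_tendsto hbsum).eventually_lt_const hδp).exists
    have hsplitb : ∑ n ∈ Finset.range N, b n ^ p + ∑' n, b (n + N) ^ p = B :=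
      Summable.sum_add_tsum_nat_add N hbsum
    have hHb : B - δ ^ p ≤ ∑ n ∈ Finset.range N, b n ^ p := by linarith
    have ev1 : ∀ᶠ k in atTop, (∑ n ∈ Finset.range N, b n ^ p) - δ
        < ∑ n ∈ Finset.range N, |a k n - b n| ^ p := by
      have ht : Tendsto (fun k => ∑ n ∈ Finset.range N, |a k n - b n| ^ p) atTop
          (𝓝 (∑ n ∈ Finset.range N, b n ^ p)) := by
        refine tendsto_finset_sum _ fun n _ => ?_
        have h1 : Tendsto (fun k => |a k n - b n|) atTop (𝓝 (b n)) := by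
          have := ((hpt n).sub_const (b n)).abs
          simpa [abs_of_nonneg (hb0 n)] using this
        have h2 := (Real.continuousAt_rpow_const (b n) p (Or.inr hp0.le)).tendsto.comp h1
        exact h2
      exact ht.eventually_const_lt (by linarith)
    have ev2 : ∀ᶠ k in atTop, ∑ n ∈ Finset.range N, a k n ^ p < δ := by
      have ht : Tendsto (fun k => ∑ n ∈ Finset.range N, a k n ^ p) atTop (𝓝 0) := by
        have h0 : (𝓝 (0:ℝ)) = 𝓝 (∑ n ∈ Finset.range N, (0:ℝ) ^ p) := by
          rw [Real.zero_rpow hp0']; simp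
        rw [h0]
        refine tendsto_finset_sum _ fun n _ => ?_
        have h2 := (Real.continuousAt_rpow_const 0 p (Or.inr hp0.le)).tendsto.comp (hpt n)
        exact h2
      exact ht.eventually_lt_const hδ
    have ev3 : ∀ᶠ k in atTop, L - δ < α k :=
      eventually_lt_of_lt_liminf (by rw [← hLdef]; linarith)
        (isBoundedUnder_of ⟨0, fun k => hα0 k⟩)
    refine le_liminf_of_le hβcob ?_
    filter_upwards [ev1, ev2, ev3] with k h1 h2 h3
    have habs : ∀ n, |a k n - b n| ≤ a k n + b n := fun n => by
      calc |a k n - b n| ≤ |a k n| + |b n| := abs_sub _ _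
      _ = a k n + b n := by rw [abs_of_nonneg (ha0 k n), abs_of_nonneg (hb0 n)]
    have hmink := Real.Lp_add_le_tsum_of_nonneg hp.le (fun n => ha0 k n) hb0 (hasum k) hbsum
    have hdsum : Summable fun n => |a k n - b n| ^ p :=
      Summable.of_nonneg_of_le (fun n => Real.rpow_nonneg (abs_nonneg _) p)
        (fun n => Real.rpow_le_rpow (abs_nonneg _) (habs n) hp0.le) hmink.1
    have hsplitd : ∑' n, |a k n - b n| ^ p
        = ∑ n ∈ Finset.range N, |a k n - b n| ^ p + ∑' n, |a k (n + N) - b (n + N)| ^ p :=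
      (Summable.sum_add_tsum_nat_add N hdsum).symm
    set TA := ∑' n, a k (n + N) ^ p with hTAdef
    set TD := ∑' n, |a k (n + N) - b (n + N)| ^ p with hTDdef
    have hTAsum : Summable fun n => a k (n + N) ^ p :=
      (summable_nat_add_iff (f := fun n => a k n ^ p) N).2 (hasum k)
    have hTDsum : Summable fun n => |a k (n + N) - b (n + N)| ^ p :=
      (summable_nat_add_iff (f := fun n => |a k n - b n| ^ p) N).2 hdsum
    have hgsum : Summable fun n => b (n + N) ^ p :=
      (summable_nat_add_iff (f := fun n => b n ^ p) N).2 hbsum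
    have hminkT := Real.Lp_add_le_tsum_of_nonneg hp.le
      (f := fun n => |a k (n + N) - b (n + N)|) (g := fun n => b (n + N))
      (fun n => abs_nonneg _) (fun n => hb0 _) hTDsum hgsum
    have hTA0 : 0 ≤ TA := tsum_nonneg fun n => Real.rpow_nonneg (ha0 _ _) p
    have hTD0 : 0 ≤ TD := tsum_nonneg fun n => Real.rpow_nonneg (abs_nonneg _) p
    have hAle : TA ^ (1/p) ≤ TD ^ (1/p) + δ := by
      have hfg : ∀ n, a k (n + N) ≤ |a k (n + N) - b (n + N)| + b (n + N) := by
        intro n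
        have := le_abs_self (a k (n + N) - b (n + N))
        linarith
      have h4 : TA ≤ ∑' n, (|a k (n + N) - b (n + N)| + b (n + N)) ^ p :=
        Summable.tsum_le_tsum (fun n => Real.rpow_le_rpow (ha0 _ _) (hfg n) hp0.le) hTAsum hminkT.1
      have h5 := Real.rpow_le_rpow hTA0 h4 h1p.le
      have h6 : (∑' n, b (n + N) ^ p) ^ (1/p) ≤ δ := by
        have h7 := Real.rpow_le_rpow (tsum_nonneg fun n => Real.rpow_nonneg (hb0 _) p)
          hN.le h1p.le
        rwa [← Real.rpow_mul hδ.le, mul_one_div_cancel hp0', Real.rpow_one] at h7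
      calc TA ^ (1/p) ≤ _ := h5
        _ ≤ TD ^ (1/p) + (∑' n, b (n + N) ^ p) ^ (1/p) := hminkT.2
        _ ≤ TD ^ (1/p) + δ := by linarith
    have hαk : α k ^ p = ∑' n, a k n ^ p := by
      rw [hα]
      show ((∑' n, a k n ^ p) ^ (1/p)) ^ p = ∑' n, a k n ^ p
      rw [← Real.rpow_mul (tsum_nonneg fun n => Real.rpow_nonneg (ha0 k n) p),
        one_div_mul_cancel hp0', Real.rpow_one]
    have hTAeq : ∑ n ∈ Finset.range N, a k n ^ p + TA = α k ^ p := by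
      rw [hαk]; exact Summable.sum_add_tsum_nat_add N (hasum k)
    have hu1le : u1 δ ≤ α k := max_le h3.le (hα0 k)
    have hu1pos : 0 ≤ u1 δ := le_max_right _ _
    have hTAge : u2 δ ≤ TA := by
      have h13 : u1 δ ^ p ≤ α k ^ p := Real.rpow_le_rpow hu1pos hu1le hp0.le
      exact max_le (by linarith) hTA0
    have hu2pos : 0 ≤ u2 δ := le_max_right _ _
    have hTD1 : u3 δ ≤ TD ^ (1/p) := by
      have h9 : u2 δ ^ (1/p) ≤ TA ^ (1/p) := Real.rpow_le_rpow hu2pos hTAge h1p.le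
      have h10 : 0 ≤ TD ^ (1/p) := Real.rpow_nonneg hTD0 _
      exact max_le (by linarith) h10
    have hTDge : u3 δ ^ p ≤ TD := by
      have h11 := Real.rpow_le_rpow (le_max_right _ _ : (0:ℝ) ≤ u3 δ) hTD1 hp0.le
      rwa [← Real.rpow_mul hTD0, one_div_mul_cancel hp0', Real.rpow_one] at h11
    have hWle : W δ ≤ ∑' n, |a k n - b n| ^ p := by
      rw [hsplitd]
      show B - δ ^ p - δ + u3 δ ^ p ≤ _
      linarith
    have hW0' : max (W δ) 0 ≤ ∑' n, |a k n - b n| ^ p :=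
      max_le hWle (tsum_nonneg fun n => Real.rpow_nonneg (abs_nonneg _) p)
    have hfinal : Φ δ ≤ (∑' n, |a k n - b n| ^ p) ^ (1/p) :=
      Real.rpow_le_rpow (le_max_right _ _) hW0' h1p.le
    exact hfinal.trans (hβ k)
  have hcont : ContinuousAt Φ 0 := by
    have crp : Continuous fun x : ℝ => x ^ p := Real.continuous_rpow_const hp0.le
    have crq : Continuous fun x : ℝ => x ^ (1/p) := Real.continuous_rpow_const h1p.le
    have hu1c : Continuous u1 := by
      rw [hu1]; exact (continuous_const.sub continuous_id).max continuous_const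
    have hu2c : Continuous u2 := by
      rw [hu2]; exact ((crp.comp hu1c).sub continuous_id).max continuous_const
    have hu3c : Continuous u3 := by
      rw [hu3]; exact ((crq.comp hu2c).sub continuous_id).max continuous_const
    have hWc : Continuous W := by
      rw [hW]; exact ((continuous_const.sub crp).sub continuous_id).add (crp.comp hu3c)
    have : Continuous Φ := by rw [hΦ]; exact crq.comp (hWc.max continuous_const)
    exact this.continuousAt
  have hev : ∀ᶠ δ in 𝓝[>] (0:ℝ), Φ δ ≤ liminf β atTop :=
    eventually_nhdsWithin_of_forall fun δ hδ => claim1 δ hδ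
  have htend : Tendsto Φ (𝓝[>] (0:ℝ)) (𝓝 ((L ^ p + B) ^ (1/p))) := by
    rw [← hΦ0]
    exact (hcont.continuousWithinAt).tendsto
  exact le_of_tendsto htend hev


private lemma mink2 {p : ℝ} (hp : 1 < p) {t s c : ℝ} (ht : 0 ≤ t) (hs : 0 ≤ s) (hc : 0 ≤ c) :
    ((t + s) ^ p + c) ^ (1/p) ≤ (t ^ p + c) ^ (1/p) + s := by
  have hp0 : (0:ℝ) < p := lt_trans one_pos hp
  have hp0' : p ≠ 0 := ne_of_gt hp0
  set f : Bool → ℝ := fun i => bif i then t else c ^ (1/p) with hf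
  set g : Bool → ℝ := fun i => bif i then s else 0 with hg
  have hf0 : ∀ i, 0 ≤ f i := by
    intro i; cases i
    · exact Real.rpow_nonneg hc _
    · exact ht
  have hg0 : ∀ i, 0 ≤ g i := by
    intro i; cases i
    · exact le_refl 0
    · exact hs
  have hfs : Summable fun i => f i ^ p := Summable.of_finite
  have hgs : Summable fun i => g i ^ p := Summable.of_finite
  have key := (Real.Lp_add_le_tsum_of_nonneg hp.le hf0 hg0 hfs hgs).2
  have e1 : ∑' i, (f i + g i) ^ p = (c ^ (1/p)) ^ p + (t + s) ^ p := by
    rw [tsum_bool]; simp [hf, hg]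
  have e2 : ∑' i, f i ^ p = (c ^ (1/p)) ^ p + t ^ p := by
    rw [tsum_bool]; simp [hf]
  have e3 : ∑' i, g i ^ p = s ^ p := by
    rw [tsum_bool]; simp [hg, Real.zero_rpow hp0']
  have hcp : (c ^ (1/p)) ^ p = c := by
    rw [← Real.rpow_mul hc, one_div_mul_cancel hp0', Real.rpow_one]
  have hsp : (s ^ p) ^ (1/p) = s := by
    rw [← Real.rpow_mul hs, mul_one_div_cancel hp0', Real.rpow_one]
  rw [e1, e2, e3, hcp, hsp] at key
  calc ((t + s) ^ p + c) ^ (1/p) = (c + (t + s) ^ p) ^ (1/p) := by rw [add_comm]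
  _ ≤ (c + t ^ p) ^ (1/p) + s := key
  _ = (t ^ p + c) ^ (1/p) + s := by rw [add_comm c]

section plumb
variable {p : ℝ} {X : ℕ → Type*} [∀ n, NormedAddCommGroup (X n)] [∀ n, NormedSpace ℝ (X n)]

variable {p : ℝ} {X : ℕ → Type*} [∀ n, NormedAddCommGroup (X n)] [∀ n, NormedSpace ℝ (X n)]

private lemma norm_piLp_one (n : ℕ) (f : cesTarget X n) :
    ‖f‖ = ∑ i : Fin (n + 1), ‖f i‖ := by
  rw [PiLp.norm_eq_sum (by norm_num : (0:ℝ) < (1:ℝ≥0∞).toReal)]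
  simp [Real.rpow_one]

private lemma norm_cesEmbed_coord (hp : 1 < p) (x : ∀ n, X n) (n : ℕ) :
    ‖cesEmbed x n‖ = (∑ i ∈ Finset.range (n + 1), ‖x i‖) / ((n : ℝ) + 1) := by
  have hn : (0:ℝ) < (n : ℝ) + 1 := by positivity
  rw [cesEmbed, norm_smul]
  rw [norm_piLp_one]
  have h1 : ∀ i : Fin (n + 1),
      ‖((WithLp.equiv 1 (∀ i : Fin (n + 1), X i)).symm (fun i => x i)) i‖ = ‖x i‖ := by
    intro i
    rfl
  rw [Finset.sum_congr rfl fun i _ => h1 i]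
  rw [Fin.sum_univ_eq_sum_range (fun i => ‖x i‖) (n + 1)]
  rw [Real.norm_eq_abs, abs_of_pos (by positivity : (0:ℝ) < ((n:ℝ)+1)⁻¹)]
  rw [inv_mul_eq_div]

private lemma norm_cesEmbed_s4 [Fact (1 ≤ ENNReal.ofReal p)] (hp : 1 < p) (x : ∀ n, X n)
    (y : lp (cesTarget X) (ENNReal.ofReal p))
    (h : (y : ∀ n, cesTarget X n) = cesEmbed x) : ‖y‖ = cesNorm p x := by
  have hp0 : (0:ℝ) < p := lt_trans one_pos hp
  have htR : (ENNReal.ofReal p).toReal = p := ENNReal.toReal_ofReal hp0.le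
  rw [lp.norm_eq_tsum_rpow (by rw [htR]; exact hp0) y, htR, cesNorm]
  congr 1
  apply tsum_congr
  intro n
  congr 1
  have hyn : (y : ∀ n, cesTarget X n) n = cesEmbed x n := congrFun h n
  rw [hyn, norm_cesEmbed_coord hp]

private lemma coord_null [Fact (1 ≤ ENNReal.ofReal p)] (hp : 1 < p)
    (x : ℕ → ∀ n, X n) (y : ℕ → lp (cesTarget X) (ENNReal.ofReal p))
    (hy : ∀ k, (y k : ∀ n, cesTarget X n) = cesEmbed (x k))
    (hw : ∀ φ : lp (cesTarget X) (ENNReal.ofReal p) →L[ℝ] ℝ,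
      Tendsto (fun k => φ (y k)) atTop (𝓝 0))
    (i : ℕ) (hSch : SchurProp (X i)) :
    Tendsto (fun k => x k i) atTop (𝓝 0) := by
  have hp0 : (0:ℝ) < p := lt_trans one_pos hp
  have hi : ((i : ℝ) + 1) ≠ 0 := by positivity
  let ℓ : lp (cesTarget X) (ENNReal.ofReal p) →ₗ[ℝ] X i :=
    { toFun := fun y => ((i : ℝ) + 1) • ((y : ∀ n, cesTarget X n) i ⟨i, Nat.lt_succ_self i⟩)
      map_add' := by
        intro u v
        rw [← smul_add]
        congr 1
      map_smul' := by
        intro c u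
        rw [RingHom.id_apply, smul_comm]
        congr 1 }
  have hbound : ∀ u : lp (cesTarget X) (ENNReal.ofReal p), ‖ℓ u‖ ≤ ((i : ℝ) + 1) * ‖u‖ := by
    intro u
    have h1 : ‖(u : ∀ n, cesTarget X n) i ⟨i, Nat.lt_succ_self i⟩‖
        ≤ ‖(u : ∀ n, cesTarget X n) i‖ := by
      rw [norm_piLp_one]
      exact Finset.single_le_sum (f := fun j : Fin (i+1) =>
        ‖(u : ∀ n, cesTarget X n) i j‖) (fun j _ => norm_nonneg _) (Finset.mem_univ _)
    have h2 : ‖(u : ∀ n, cesTarget X n) i‖ ≤ ‖u‖ :=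
      lp.norm_apply_le_norm (by simp [ENNReal.ofReal_pos, hp0, (ENNReal.ofReal_pos.mpr hp0).ne']) u i
    have hlu : ℓ u = ((i : ℝ) + 1) • ((u : ∀ n, cesTarget X n) i ⟨i, Nat.lt_succ_self i⟩) :=
      rfl
    rw [hlu, norm_smul, Real.norm_eq_abs, abs_of_pos (by positivity : (0:ℝ) < (i:ℝ)+1)]
    exact mul_le_mul_of_nonneg_left (h1.trans h2) (by positivity)
  let ℓc : lp (cesTarget X) (ENNReal.ofReal p) →L[ℝ] X i :=
    LinearMap.mkContinuous ℓ ((i : ℝ) + 1) hbound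
  have hval : ∀ k, ℓc (y k) = x k i := by
    intro k
    have hlc : ℓc (y k) = ((i : ℝ) + 1) •
        ((y k : ∀ n, cesTarget X n) i ⟨i, Nat.lt_succ_self i⟩) := rfl
    rw [hlc, hy k]
    show ((i : ℝ) + 1) • ((((i : ℝ) + 1)⁻¹ •
      (WithLp.equiv 1 (∀ j : Fin (i + 1), X j)).symm (fun j => x k j)) ⟨i, Nat.lt_succ_self i⟩)
      = x k i
    have : ((((i : ℝ) + 1)⁻¹ •
        (WithLp.equiv 1 (∀ j : Fin (i + 1), X j)).symm (fun j => x k j)) ⟨i, Nat.lt_succ_self i⟩)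
        = ((i : ℝ) + 1)⁻¹ • x k i := rfl
    rw [this, smul_smul, mul_inv_cancel₀ hi, one_smul]
  apply hSch
  intro φ
  have := hw (φ.comp ℓc)
  rw [map_zero]
  simp only [ContinuousLinearMap.comp_apply, hval] at this
  exact this

private lemma bs_bound [Fact (1 ≤ ENNReal.ofReal p)]
    (y : ℕ → lp (cesTarget X) (ENNReal.ofReal p))
    (hw : ∀ φ : lp (cesTarget X) (ENNReal.ofReal p) →L[ℝ] ℝ,
      Tendsto (fun k => φ (y k)) atTop (𝓝 0)) :
    ∃ C, ∀ k, ‖y k‖ ≤ C := by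
  obtain ⟨C, hC⟩ := banach_steinhaus
    (g := fun k => NormedSpace.inclusionInDoubleDual ℝ (lp (cesTarget X) (ENNReal.ofReal p)) (y k))
    (by
      intro φ
      obtain ⟨M, hM⟩ := ((hw φ).norm).bddAbove_range
      refine ⟨M, fun k => ?_⟩
      rw [NormedSpace.dual_def]
      exact hM (Set.mem_range_self k))
  refine ⟨C, fun k => ?_⟩
  have hiso := (NormedSpace.inclusionInDoubleDualLi (𝕜 := ℝ)
    (E := lp (cesTarget X) (ENNReal.ofReal p))).norm_map (y k)
  have : ‖NormedSpace.inclusionInDoubleDual ℝ (lp (cesTarget X) (ENNReal.ofReal p)) (y k)‖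
      = ‖y k‖ := hiso
  calc ‖y k‖ = _ := this.symm
  _ ≤ C := by
    have := hC k
    calc ‖NormedSpace.inclusionInDoubleDual ℝ _ (y k)‖ ≤ C := this
end plumb

/-- If `1 < p < ∞` and every `Xₙ` has the Schur property, then the
`p`-Cesàro sum `[⊕ₙ Xₙ]_{ces_p}` has the uniform Opial property (weak convergence in the
Cesàro sum being expressed via the isometric embedding `S` into the `ℓ^p`-sum
`[⊕ₙ (X₁ ⊕₁ ⋯ ⊕₁ Xₙ)]_p`). -/
theorem stmt4 (p : ℝ) (hp : 1 < p) [Fact (1 ≤ ENNReal.ofReal p)]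
    (X : ℕ → Type*) [∀ n, NormedAddCommGroup (X n)] [∀ n, NormedSpace ℝ (X n)]
    [∀ n, CompleteSpace (X n)]
    (hSchur : ∀ n, SchurProp (X n)) :
    ∀ ε > (0 : ℝ), ∀ R > (0 : ℝ), ∃ η > (0 : ℝ),
      ∀ z : ∀ n, X n, MemCes p z → ε ≤ cesNorm p z →
        ∀ x : ℕ → ∀ n, X n, (∀ k, MemCes p (x k)) →
          ∀ y : ℕ → lp (cesTarget X) (ENNReal.ofReal p),
            (∀ k, (y k : ∀ n, cesTarget X n) = cesEmbed (x k)) →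
            (∀ φ : lp (cesTarget X) (ENNReal.ofReal p) →L[ℝ] ℝ,
              Tendsto (fun k => φ (y k)) atTop (𝓝 0)) →
            limsup (fun k => cesNorm p (x k)) atTop ≤ R →
            η + liminf (fun k => cesNorm p (x k)) atTop ≤
              liminf (fun k => cesNorm p (x k - z)) atTop := by
  intro ε hε R hR
  have hp0 : (0:ℝ) < p := lt_trans one_pos hp
  have hp0' : p ≠ 0 := ne_of_gt hp0
  have h1p : (0:ℝ) < 1/p := by positivity
  refine ⟨(R ^ p + ε ^ p) ^ (1/p) - R, ?_, ?_⟩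
  · have h1 : R ^ p < R ^ p + ε ^ p := lt_add_of_pos_right _ (Real.rpow_pos_of_pos hε p)
    have h2 := Real.rpow_lt_rpow (Real.rpow_nonneg hR.le p) h1 h1p
    have h3 : (R ^ p) ^ (1/p) = R := by
      rw [← Real.rpow_mul hR.le, mul_one_div_cancel hp0', Real.rpow_one]
    rw [h3] at h2
    linarith
  intro z hz hεz x hx y hy hw hlimsup
  set a : ℕ → ℕ → ℝ := fun k n => (∑ i ∈ Finset.range (n+1), ‖x k i‖) / ((n:ℝ)+1) with ha
  set b : ℕ → ℝ := fun n => (∑ i ∈ Finset.range (n+1), ‖z i‖) / ((n:ℝ)+1) with hb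
  have ha0 : ∀ k n, 0 ≤ a k n := fun k n =>
    div_nonneg (Finset.sum_nonneg fun i _ => norm_nonneg _) (by positivity)
  have hb0 : ∀ n, 0 ≤ b n := fun n =>
    div_nonneg (Finset.sum_nonneg fun i _ => norm_nonneg _) (by positivity)
  have hasum : ∀ k, Summable fun n => a k n ^ p := hx
  have hbsum : Summable fun n => b n ^ p := hz
  have hcesα : ∀ k, cesNorm p (x k) = (∑' n, a k n ^ p) ^ (1/p) := fun k => rfl
  have hcesb : cesNorm p z = (∑' n, b n ^ p) ^ (1/p) := rfl
  have hcoord : ∀ i, Tendsto (fun k => ‖x k i‖) atTop (𝓝 0) := by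
    intro i
    have := (coord_null hp x y hy hw i (hSchur i)).norm
    simpa using this
  have hpt : ∀ n, Tendsto (fun k => a k n) atTop (𝓝 0) := by
    intro n
    have hs : Tendsto (fun k => ∑ i ∈ Finset.range (n+1), ‖x k i‖) atTop (𝓝 0) := by
      have h := tendsto_finset_sum (Finset.range (n+1))
        (fun i (_ : i ∈ Finset.range (n+1)) => hcoord i)
      simpa using h
    have h2 := hs.div_const ((n:ℝ)+1)
    simp only [zero_div] at h2
    exact h2
  obtain ⟨C0, hC0⟩ := bs_bound y hw
  have hαbd : ∀ k, (∑' n, a k n ^ p) ^ (1/p) ≤ C0 := by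
    intro k
    rw [← hcesα k, ← norm_cesEmbed_s4 hp (x k) (y k) (hy k)]
    exact hC0 k
  have key : ∀ k, (∑' n, |a k n - b n| ^ p) ^ (1/p) ≤ cesNorm p (x k - z) ∧
      cesNorm p (x k - z) ≤ C0 + cesNorm p z := by
    intro k
    set g : ℕ → ℝ := fun n => (∑ i ∈ Finset.range (n+1), ‖(x k - z) i‖) / ((n:ℝ)+1) with hgdef
    have hg0 : ∀ n, 0 ≤ g n := fun n =>
      div_nonneg (Finset.sum_nonneg fun i _ => norm_nonneg _) (by positivity)
    have habsle : ∀ n, |a k n - b n| ≤ g n := by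
      intro n
      simp only [ha, hb, hgdef]
      rw [div_sub_div_same, abs_div, abs_of_pos (by positivity : (0:ℝ) < (n:ℝ)+1)]
      have hnum : |∑ i ∈ Finset.range (n+1), ‖x k i‖ - ∑ i ∈ Finset.range (n+1), ‖z i‖|
          ≤ ∑ i ∈ Finset.range (n+1), ‖(x k - z) i‖ := by
        rw [← Finset.sum_sub_distrib]
        refine (Finset.abs_sum_le_sum_abs _ _).trans ?_
        refine Finset.sum_le_sum fun i _ => ?_
        have h5 := abs_norm_sub_norm_le (x k i) (z i)
        simpa [Pi.sub_apply] using h5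
      gcongr
    have hgle : ∀ n, g n ≤ a k n + b n := by
      intro n
      simp only [ha, hb, hgdef]
      rw [← add_div]
      have hnum : ∑ i ∈ Finset.range (n+1), ‖(x k - z) i‖
          ≤ ∑ i ∈ Finset.range (n+1), ‖x k i‖ + ∑ i ∈ Finset.range (n+1), ‖z i‖ := by
        rw [← Finset.sum_add_distrib]
        refine Finset.sum_le_sum fun i _ => ?_
        have h5 := norm_sub_le (x k i) (z i)
        simpa [Pi.sub_apply] using h5
      gcongr
    have hmink := Real.Lp_add_le_tsum_of_nonneg hp.le (fun n => ha0 k n) hb0 (hasum k) hbsum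
    have hgsum : Summable fun n => g n ^ p :=
      Summable.of_nonneg_of_le (fun n => Real.rpow_nonneg (hg0 n) p)
        (fun n => Real.rpow_le_rpow (hg0 n) (hgle n) hp0.le) hmink.1
    have hdsum : Summable fun n => |a k n - b n| ^ p :=
      Summable.of_nonneg_of_le (fun n => Real.rpow_nonneg (abs_nonneg _) p)
        (fun n => Real.rpow_le_rpow (abs_nonneg _) ((habsle n).trans (hgle n)) hp0.le) hmink.1
    have hgces : cesNorm p (x k - z) = (∑' n, g n ^ p) ^ (1/p) := rfl
    constructor
    · have hts : ∑' n, |a k n - b n| ^ p ≤ ∑' n, g n ^ p :=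
        Summable.tsum_le_tsum (fun n => Real.rpow_le_rpow (abs_nonneg _) (habsle n) hp0.le) hdsum hgsum
      rw [hgces]
      exact Real.rpow_le_rpow (tsum_nonneg fun n => Real.rpow_nonneg (abs_nonneg _) p) hts h1p.le
    · have hts : ∑' n, g n ^ p ≤ ∑' n, (a k n + b n) ^ p :=
        Summable.tsum_le_tsum (fun n => Real.rpow_le_rpow (hg0 n) (hgle n) hp0.le) hgsum hmink.1
      have h6 : (∑' n, g n ^ p) ^ (1/p) ≤ (∑' n, (a k n + b n) ^ p) ^ (1/p) :=
        Real.rpow_le_rpow (tsum_nonneg fun n => Real.rpow_nonneg (hg0 n) p) hts h1p.le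
      rw [hgces, hcesb]
      calc (∑' n, g n ^ p) ^ (1/p) ≤ _ := h6.trans hmink.2
      _ ≤ C0 + (∑' n, b n ^ p) ^ (1/p) := by
        have := hαbd k
        linarith
  have main := core hp ha0 hb0 hasum hbsum hpt hαbd (fun k => (key k).1) (fun k => (key k).2)
  have hfun1 : (fun k => cesNorm p (x k)) = fun k => (∑' n, a k n ^ p) ^ (1/p) :=
    funext fun k => hcesα k
  rw [hfun1] at hlimsup ⊢
  set L := liminf (fun k => (∑' n, a k n ^ p) ^ (1/p)) atTop with hL
  have hα0 : ∀ k, 0 ≤ (∑' n, a k n ^ p) ^ (1/p) := fun k =>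
    Real.rpow_nonneg (tsum_nonneg fun n => Real.rpow_nonneg (ha0 k n) p) _
  have hL0 : 0 ≤ L :=
    le_liminf_of_le ((isBoundedUnder_of ⟨C0, hαbd⟩).isCoboundedUnder_ge)
      (Eventually.of_forall hα0)
  have hLR : L ≤ R := by
    have h1 : L ≤ limsup (fun k => (∑' n, a k n ^ p) ^ (1/p)) atTop :=
      liminf_le_limsup (isBoundedUnder_of ⟨C0, hαbd⟩) (isBoundedUnder_of ⟨0, hα0⟩)
    linarith [hlimsup]
  have hεB : ε ^ p ≤ ∑' n, b n ^ p := by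
    have h1 := Real.rpow_le_rpow hε.le hεz hp0.le
    have h2 : (cesNorm p z) ^ p = ∑' n, b n ^ p := by
      rw [hcesb, ← Real.rpow_mul (tsum_nonneg fun n => Real.rpow_nonneg (hb0 n) p),
        one_div_mul_cancel hp0', Real.rpow_one]
    linarith
  have hmk : (R ^ p + ε ^ p) ^ (1/p) - R + L ≤ (L ^ p + ε ^ p) ^ (1/p) := by
    have h7 := mink2 hp hL0 (by linarith : (0:ℝ) ≤ R - L) (Real.rpow_nonneg hε.le p)
    have h8 : L + (R - L) = R := by ring
    rw [h8] at h7
    linarith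
  have hmono : (L ^ p + ε ^ p) ^ (1/p) ≤ (L ^ p + ∑' n, b n ^ p) ^ (1/p) :=
    Real.rpow_le_rpow (add_nonneg (Real.rpow_nonneg hL0 p) (Real.rpow_nonneg hε.le p))
      (by linarith) h1p.le
  calc (R ^ p + ε ^ p) ^ (1/p) - R + L ≤ (L ^ p + ε ^ p) ^ (1/p) := hmk
  _ ≤ (L ^ p + ∑' n, b n ^ p) ^ (1/p) := hmono
  _ ≤ liminf (fun k => cesNorm p (x k - z)) atTop := main
end

section
/- Let 1 ≤ p < ∞ and let X be a real Banach space with the nonstrict Opial property. Let (f_n)_{n∈ℕ} be a sequence in Ces_p(X) with sup_n ‖f_n‖_{Ces_p(X)} < ∞ such that for almost every t ∈ [0,1] the sequence (f_n(t))_n converges weakly to 0 in X, and suppose there exists g ∈ Ces_p such that ‖f_n(t)‖ → g(t) for almost every t. Then for every f ∈ Ces_p(X), limsup_{n→∞} ‖f_n‖_{Ces_p(X)} ≤ 2^{1−1/p} limsup_{n→∞} ‖f_n − f‖_{Ces_p(X)}. -/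
open Filter MeasureTheory Set
open scoped ENNReal Topology

/-- The Cesàro function-space norm
`‖f‖_{Ces_p(X)} = (∫₀¹ ((1/t) ∫₀ᵗ ‖f(s)‖ ds)^p dt)^{1/p}` of a function `f : [0,1] → X`. -/
noncomputable def cesFNorm (p : ℝ) {X : Type*} [NormedAddCommGroup X] (f : ℝ → X) : ℝ :=
  (∫ t in Ioc (0 : ℝ) 1, ((1 / t) * ∫ s in Ioc (0 : ℝ) t, ‖f s‖) ^ p) ^ (1 / p)

/-- Membership in the Cesàro space `Ces_p(X)`: `f` is Bochner-measurable and its Cesàro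
norm is finite (expressed via the lower integral, so that finiteness is meaningful). -/
def MemCesF (p : ℝ) {X : Type*} [NormedAddCommGroup X] (f : ℝ → X) : Prop :=
  AEStronglyMeasurable f (volume.restrict (Ioc (0 : ℝ) 1)) ∧
    (∫⁻ t in Ioc (0 : ℝ) 1,
      ((∫⁻ s in Ioc (0 : ℝ) t, (‖f s‖₊ : ℝ≥0∞)) / ENNReal.ofReal t) ^ p) < ⊤

namespace Stmt6

variable {Y : Type*} [NormedAddCommGroup Y]

/-- The inner (lower) integral `∫⁻₀ᵗ ‖h‖`. -/
noncomputable def Iin (h : ℝ → Y) (t : ℝ) : ℝ≥0∞ := ∫⁻ s in Ioc (0 : ℝ) t, (‖h s‖₊ : ℝ≥0∞)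

/-- The Cesàro average `t ↦ (1/t) ∫₀ᵗ ‖h‖`. -/
noncomputable def Phi (h : ℝ → Y) (t : ℝ) : ℝ := (1 / t) * ∫ s in Ioc (0 : ℝ) t, ‖h s‖

lemma Phi_nonneg (h : ℝ → Y) (t : ℝ) : 0 ≤ Phi h t := by
  rcases le_or_gt t 0 with ht | ht
  · simp [Phi, Ioc_eq_empty (not_lt.mpr ht)]
  · exact mul_nonneg (by positivity) (integral_nonneg fun s => norm_nonneg _)

lemma monotone_Iin (h : ℝ → Y) : Monotone (Iin h) :=
  fun _ _ hab => lintegral_mono_set (Ioc_subset_Ioc_right hab)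

lemma measurable_Iin (h : ℝ → Y) : Measurable (Iin h) := (monotone_Iin h).measurable

lemma Phi_eq (h : ℝ → Y) (hmeas : AEStronglyMeasurable h (volume.restrict (Ioc (0:ℝ) 1)))
    {t : ℝ} (ht : t ∈ Ioc (0:ℝ) 1) :
    Phi h t = (1 / t) * (Iin h t).toReal := by
  have hsub : Ioc (0:ℝ) t ⊆ Ioc (0:ℝ) 1 := Ioc_subset_Ioc_right ht.2
  have hm : AEStronglyMeasurable (fun s => ‖h s‖) (volume.restrict (Ioc (0:ℝ) t)) :=
    hmeas.norm.mono_measure (Measure.restrict_mono hsub le_rfl)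
  rw [Phi, integral_eq_lintegral_of_nonneg_ae
      (Filter.Eventually.of_forall fun s => norm_nonneg _) hm]
  congr 2
  refine lintegral_congr fun s => ?_
  exact ofReal_norm _

lemma aesm_Phi (h : ℝ → Y) (hmeas : AEStronglyMeasurable h (volume.restrict (Ioc (0:ℝ) 1))) :
    AEStronglyMeasurable (Phi h) (volume.restrict (Ioc (0:ℝ) 1)) := by
  have hψ : Measurable fun t : ℝ => (1 / t) * (Iin h t).toReal :=
    (measurable_one.div measurable_id).mul (measurable_Iin h).ennreal_toReal
  refine hψ.aestronglyMeasurable.congr ?_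
  filter_upwards [ae_restrict_mem measurableSet_Ioc] with t ht
  exact (Phi_eq h hmeas ht).symm

variable {p : ℝ}

lemma memces_lt_top' (hp : 0 < p) {h : ℝ → Y} (hh : MemCesF p h) :
    ∀ᵐ t ∂(volume.restrict (Ioc (0:ℝ) 1)), Iin h t < ⊤ := by
  have hmeas : Measurable fun t => ((Iin h t) / ENNReal.ofReal t) ^ p :=
    ((measurable_Iin h).div ENNReal.measurable_ofReal).pow_const _
  have hae := ae_lt_top hmeas hh.2.ne
  filter_upwards [hae, ae_restrict_mem measurableSet_Ioc] with t ht hmem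
  by_contra hcon
  push_neg at hcon
  rw [top_le_iff] at hcon
  rw [hcon, ENNReal.top_div_of_ne_top ENNReal.ofReal_ne_top,
    ENNReal.top_rpow_of_pos hp] at ht
  exact absurd ht (lt_irrefl _)

lemma ofReal_Phi {h : ℝ → Y} (hp : 0 ≤ p) {t : ℝ} (ht : t ∈ Ioc (0:ℝ) 1)
    (hfin : Iin h t < ⊤) (hmeas : AEStronglyMeasurable h (volume.restrict (Ioc (0:ℝ) 1))) :
    ENNReal.ofReal (Phi h t ^ p) = ((Iin h t) / ENNReal.ofReal t) ^ p := by
  rw [← ENNReal.ofReal_rpow_of_nonneg (Phi_nonneg h t) hp]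
  congr 1
  rw [Phi_eq h hmeas ht, ENNReal.ofReal_mul (one_div_nonneg.mpr ht.1.le),
    ENNReal.ofReal_toReal hfin.ne, one_div, ENNReal.ofReal_inv_of_pos ht.1,
    div_eq_mul_inv, mul_comm]

lemma lint_eq (hp : 0 < p) {h : ℝ → Y} (hh : MemCesF p h) :
    (∫⁻ t in Ioc (0:ℝ) 1, ENNReal.ofReal (Phi h t ^ p)) =
      ∫⁻ t in Ioc (0:ℝ) 1, ((Iin h t) / ENNReal.ofReal t) ^ p := by
  refine lintegral_congr_ae ?_
  filter_upwards [memces_lt_top' hp hh, ae_restrict_mem measurableSet_Ioc] with t hfin hmem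
  exact ofReal_Phi hp.le hmem hfin hh.1

lemma lint_lt_top (hp : 0 < p) {h : ℝ → Y} (hh : MemCesF p h) :
    (∫⁻ t in Ioc (0:ℝ) 1, ENNReal.ofReal (Phi h t ^ p)) < ⊤ := by
  rw [lint_eq hp hh]; exact hh.2

lemma eLp_eq (hp : 0 < p) {G : ℝ → ℝ}
    (hG : AEStronglyMeasurable G (volume.restrict (Ioc (0:ℝ) 1))) (hG0 : ∀ t, 0 ≤ G t) :
    eLpNorm G (ENNReal.ofReal p) (volume.restrict (Ioc (0:ℝ) 1)) =
      (∫⁻ t in Ioc (0:ℝ) 1, ENNReal.ofReal (G t ^ p)) ^ (1 / p) := by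
  rw [eLpNorm_eq_lintegral_rpow_enorm_toReal (by simpa using hp) ENNReal.ofReal_ne_top,
    ENNReal.toReal_ofReal hp.le]
  congr 1
  refine lintegral_congr fun t => ?_
  rw [← ofReal_norm, Real.norm_of_nonneg (hG0 t),
    ENNReal.ofReal_rpow_of_nonneg (hG0 t) hp.le]

lemma ces_eq (hp : 0 < p) {h : ℝ → Y} (hh : MemCesF p h) :
    cesFNorm p h =
      (eLpNorm (Phi h) (ENNReal.ofReal p) (volume.restrict (Ioc (0:ℝ) 1))).toReal := by
  rw [eLp_eq hp (aesm_Phi h hh.1) (Phi_nonneg h), ← ENNReal.toReal_rpow]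
  have : (∫ t in Ioc (0:ℝ) 1, Phi h t ^ p) =
      (∫⁻ t in Ioc (0:ℝ) 1, ENNReal.ofReal (Phi h t ^ p)).toReal := by
    refine integral_eq_lintegral_of_nonneg_ae
      (Filter.Eventually.of_forall fun t => Real.rpow_nonneg (Phi_nonneg h t) p) ?_
    exact (aesm_Phi h hh.1).aemeasurable.pow_const p |>.aestronglyMeasurable
  rw [cesFNorm]
  rw [show (∫ t in Ioc (0:ℝ) 1, ((1/t) * ∫ s in Ioc (0:ℝ) t, ‖h s‖) ^ p)
      = ∫ t in Ioc (0:ℝ) 1, Phi h t ^ p from rfl, this]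

lemma memces_sub (hp : 0 < p) {u v : ℝ → Y} (hu : MemCesF p u) (hv : MemCesF p v) :
    MemCesF p (fun s => u s - v s) := by
  refine ⟨hu.1.sub hv.1, ?_⟩
  have pow2 : ∀ x y : ℝ≥0∞, (x + y) ^ p ≤ 2 ^ p * (x ^ p + y ^ p) := by
    intro x y
    have h1 : x + y ≤ 2 * max x y := by
      rw [two_mul]
      exact add_le_add (le_max_left _ _) (le_max_right _ _)
    calc (x + y) ^ p ≤ (2 * max x y) ^ p := ENNReal.rpow_le_rpow h1 hp.le
      _ = 2 ^ p * (max x y) ^ p := ENNReal.mul_rpow_of_nonneg _ _ hp.le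
      _ ≤ 2 ^ p * (x ^ p + y ^ p) := by
          refine mul_le_mul_right ?_ _
          rcases le_total x y with h | h
          · rw [max_eq_right h]; exact le_add_self
          · rw [max_eq_left h]; exact self_le_add_right _ _
  have hmeasu : Measurable fun t => (Iin u t / ENNReal.ofReal t) ^ p :=
    ((measurable_Iin u).div ENNReal.measurable_ofReal).pow_const _
  calc (∫⁻ t in Ioc (0:ℝ) 1, (Iin (fun s => u s - v s) t / ENNReal.ofReal t) ^ p)
      ≤ ∫⁻ t in Ioc (0:ℝ) 1,
          (2:ℝ≥0∞) ^ p * ((Iin u t / ENNReal.ofReal t) ^ p + (Iin v t / ENNReal.ofReal t) ^ p) := by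
        refine lintegral_mono_ae ?_
        filter_upwards [ae_restrict_mem measurableSet_Ioc] with t ht
        have hsub : Ioc (0:ℝ) t ⊆ Ioc (0:ℝ) 1 := Ioc_subset_Ioc_right ht.2
        have hmono : volume.restrict (Ioc (0:ℝ) t) ≤ volume.restrict (Ioc (0:ℝ) 1) :=
          Measure.restrict_mono hsub le_rfl
        have hIle : Iin (fun s => u s - v s) t ≤ Iin u t + Iin v t := by
          rw [Iin, Iin, Iin,
            ← lintegral_add_left' (f := fun s => (‖u s‖₊ : ℝ≥0∞)) (hu.1.enorm.mono_measure hmono)]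
          refine lintegral_mono fun s => ?_
          have hcc := ENNReal.coe_le_coe.mpr (nnnorm_sub_le (u s) (v s))
          rw [ENNReal.coe_add] at hcc
          exact hcc
        calc (Iin (fun s => u s - v s) t / ENNReal.ofReal t) ^ p
            ≤ ((Iin u t + Iin v t) / ENNReal.ofReal t) ^ p :=
              ENNReal.rpow_le_rpow (ENNReal.div_le_div_right hIle _) hp.le
          _ = (Iin u t / ENNReal.ofReal t + Iin v t / ENNReal.ofReal t) ^ p := by
              rw [ENNReal.add_div]
          _ ≤ _ := pow2 _ _
    _ = (2:ℝ≥0∞) ^ p * ((∫⁻ t in Ioc (0:ℝ) 1, (Iin u t / ENNReal.ofReal t) ^ p) +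
          ∫⁻ t in Ioc (0:ℝ) 1, (Iin v t / ENNReal.ofReal t) ^ p) := by
        rw [lintegral_const_mul' _ _ (ENNReal.rpow_ne_top_of_nonneg hp.le (by simp)),
          lintegral_add_left hmeasu]
    _ < ⊤ := by
        refine ENNReal.mul_lt_top ?_ ?_
        · exact ENNReal.rpow_lt_top_of_nonneg hp.le (by simp)
        · exact ENNReal.add_lt_top.mpr ⟨hu.2, hv.2⟩

end Stmt6

namespace Stmt6

variable {X : Type*} [NormedAddCommGroup X] [NormedSpace ℝ X]

lemma key_pointwise (hX : NonstrictOpial X) (u : ℕ → X) (x : X) (a : ℝ)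
    (hw : ∀ φ : X →L[ℝ] ℝ, Tendsto (fun n => φ (u n)) atTop (𝓝 0))
    (hc : Tendsto (fun n => ‖u n‖) atTop (𝓝 a))
    {ε : ℝ} (hε : 0 < ε) :
    ∀ᶠ n in atTop, a - ε ≤ ‖u n - x‖ := by
  by_contra hcon
  rw [Filter.not_eventually] at hcon
  have hcon' : ∃ᶠ n in atTop, ‖u n - x‖ < a - ε := by
    refine hcon.mono fun n hn => ?_; linarith [not_le.mp hn]
  obtain ⟨φ, hφmono, hφ⟩ := Filter.extraction_of_frequently_atTop hcon'
  have hwsub : ∀ ψ : X →L[ℝ] ℝ, Tendsto (fun k => ψ (u (φ k))) atTop (𝓝 0) :=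
    fun ψ => (hw ψ).comp hφmono.tendsto_atTop
  have hopial := hX (fun k => u (φ k)) hwsub x
  have hlim : limsup (fun k => ‖u (φ k)‖) atTop = a :=
    (hc.comp hφmono.tendsto_atTop).limsup_eq
  have hub : limsup (fun k => ‖u (φ k) - x‖) atTop ≤ a - ε := by
    refine limsup_le_of_le (isCoboundedUnder_le_of_le atTop fun k => norm_nonneg _) ?_
    exact Filter.Eventually.of_forall fun k => (hφ k).le
  rw [hlim] at hopial
  have : a ≤ a - ε := le_trans hopial hub
  linarith

lemma phi_diff_bounds {h₁ h₂ : ℝ → X}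
    (hm₁ : AEStronglyMeasurable h₁ (volume.restrict (Ioc (0:ℝ) 1)))
    (hm₂ : AEStronglyMeasurable h₂ (volume.restrict (Ioc (0:ℝ) 1)))
    {t : ℝ} (ht : t ∈ Ioc (0:ℝ) 1) (hfin₁ : Iin h₁ t < ⊤) (hfin₂ : Iin h₂ t < ⊤) :
    Phi h₁ t - Phi (fun s => h₁ s - h₂ s) t ≤ Phi h₂ t ∧
      Phi (fun s => h₁ s - h₂ s) t ≤ Phi h₁ t + Phi h₂ t := by
  set ν : Measure ℝ := volume.restrict (Ioc (0:ℝ) t) with hν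
  have hsub : Ioc (0:ℝ) t ⊆ Ioc (0:ℝ) 1 := Ioc_subset_Ioc_right ht.2
  have hmono : ν ≤ volume.restrict (Ioc (0:ℝ) 1) := Measure.restrict_mono hsub le_rfl
  have h1m : AEStronglyMeasurable h₁ ν := hm₁.mono_measure hmono
  have h2m : AEStronglyMeasurable h₂ ν := hm₂.mono_measure hmono
  have int₁ : Integrable (fun s => ‖h₁ s‖) ν := by
    refine ⟨h1m.norm, ?_⟩
    rw [hasFiniteIntegral_def]
    simpa [Iin, nnnorm_norm, ← enorm_eq_nnnorm] using hfin₁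
  have int₂ : Integrable (fun s => ‖h₂ s‖) ν := by
    refine ⟨h2m.norm, ?_⟩
    rw [hasFiniteIntegral_def]
    simpa [Iin, nnnorm_norm, ← enorm_eq_nnnorm] using hfin₂
  have int₁₂ : Integrable (fun s => ‖h₁ s - h₂ s‖) ν := by
    refine Integrable.mono' (int₁.add int₂) (h1m.sub h2m).norm ?_
    exact Filter.Eventually.of_forall fun s => by
      simpa [Real.norm_of_nonneg (norm_nonneg _)] using norm_sub_le (h₁ s) (h₂ s)
  have htinv : (0:ℝ) ≤ 1 / t := one_div_nonneg.mpr ht.1.le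
  constructor
  · rw [Phi, Phi, Phi, ← mul_sub, ← integral_sub int₁ int₁₂]
    refine mul_le_mul_of_nonneg_left ?_ htinv
    refine integral_mono (int₁.sub int₁₂) int₂ fun s => ?_
    have := norm_sub_norm_le (h₁ s) (h₁ s - h₂ s)
    simpa [sub_sub_cancel] using this
  · rw [Phi, Phi, Phi, ← mul_add, ← integral_add int₁ int₂]
    refine mul_le_mul_of_nonneg_left ?_ htinv
    exact integral_mono int₁₂ (int₁.add int₂) fun s => norm_sub_le _ _

lemma tendsto_r (fn : ℕ → ℝ → X) (f : ℝ → X) (g : ℝ → ℝ)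
    (hfn_m : ∀ n, AEStronglyMeasurable (fn n) (volume.restrict (Ioc (0:ℝ) 1)))
    (hf_m : AEStronglyMeasurable f (volume.restrict (Ioc (0:ℝ) 1)))
    (hkey : ∀ᵐ s ∂(volume.restrict (Ioc (0:ℝ) 1)), ∀ ε : ℝ, 0 < ε →
      ∀ᶠ n in atTop, ‖fn n s‖ ≤ g s + ε ∧ g s - ε ≤ ‖fn n s - f s‖)
    {t : ℝ} (ht : t ∈ Ioc (0:ℝ) 1) (hfinf : Iin f t < ⊤) (hfinn : ∀ n, Iin (fn n) t < ⊤) :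
    Tendsto (fun n => max (Phi (fn n) t - Phi (fun s => fn n s - f s) t) 0) atTop (𝓝 0) := by
  have htpos : (0:ℝ) < t := ht.1
  set ν : Measure ℝ := volume.restrict (Ioc (0:ℝ) t) with hν
  have hsub : Ioc (0:ℝ) t ⊆ Ioc (0:ℝ) 1 := Ioc_subset_Ioc_right ht.2
  have hmono : ν ≤ volume.restrict (Ioc (0:ℝ) 1) := Measure.restrict_mono hsub le_rfl
  have hfm : AEStronglyMeasurable f ν := hf_m.mono_measure hmono
  have hfnm : ∀ n, AEStronglyMeasurable (fn n) ν := fun n => (hfn_m n).mono_measure hmono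
  have int_f : Integrable (fun s => ‖f s‖) ν := by
    refine ⟨hfm.norm, ?_⟩
    rw [hasFiniteIntegral_def]
    simpa [Iin, nnnorm_norm, ← enorm_eq_nnnorm] using hfinf
  have int_fn : ∀ n, Integrable (fun s => ‖fn n s‖) ν := by
    intro n
    refine ⟨(hfnm n).norm, ?_⟩
    rw [hasFiniteIntegral_def]
    simpa [Iin, nnnorm_norm, ← enorm_eq_nnnorm] using hfinn n
  have int_hn : ∀ n, Integrable (fun s => ‖fn n s - f s‖) ν := by
    intro n
    refine Integrable.mono' ((int_fn n).add int_f) ((hfnm n).sub hfm).norm ?_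
    exact Filter.Eventually.of_forall fun s => by
      simpa [Real.norm_of_nonneg (norm_nonneg _)] using norm_sub_le (fn n s) (f s)
  have int_dn : ∀ n, Integrable (fun s => ‖fn n s‖ - ‖fn n s - f s‖) ν :=
    fun n => (int_fn n).sub (int_hn n)
  have int_kn : ∀ n, Integrable (fun s => ‖f s‖ - (‖fn n s‖ - ‖fn n s - f s‖)) ν :=
    fun n => int_f.sub (int_dn n)
  have hdn_le : ∀ n s, ‖fn n s‖ - ‖fn n s - f s‖ ≤ ‖f s‖ := by
    intro n s
    have := norm_sub_norm_le (fn n s) (fn n s - f s)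
    simpa [sub_sub_cancel] using this
  have hkn_nonneg : ∀ n s, 0 ≤ ‖f s‖ - (‖fn n s‖ - ‖fn n s - f s‖) :=
    fun n s => sub_nonneg.mpr (hdn_le n s)
  have hkn_le : ∀ n s, ‖f s‖ - (‖fn n s‖ - ‖fn n s - f s‖) ≤ 2 * ‖f s‖ := by
    intro n s
    have := norm_sub_norm_le (fn n s - f s) (fn n s)
    have h2 : ‖fn n s - f s‖ - ‖fn n s‖ ≤ ‖f s‖ := by
      simpa [sub_sub_cancel_left, norm_neg] using this
    linarith
  set Lf : ℝ≥0∞ := ∫⁻ s, ENNReal.ofReal ‖f s‖ ∂ν with hLfdef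
  have hLf_eq : Lf = Iin f t := by
    refine lintegral_congr fun s => ?_
    exact ofReal_norm _
  have hLf_top : Lf ≠ ⊤ := by rw [hLf_eq]; exact hfinf.ne
  set c : ℝ := ∫ s, ‖f s‖ ∂ν with hcdef
  have hc : c = Lf.toReal := by
    rw [hcdef, integral_eq_lintegral_of_nonneg_ae
      (Filter.Eventually.of_forall fun s => norm_nonneg _) hfm.norm]
  have hLf_ofReal : ENNReal.ofReal c = Lf := by rw [hc, ENNReal.ofReal_toReal hLf_top]
  set K : ℕ → ℝ≥0∞ := fun n =>
    ∫⁻ s, ENNReal.ofReal (‖f s‖ - (‖fn n s‖ - ‖fn n s - f s‖)) ∂ν with hKdef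
  have hK_meas : ∀ n, AEMeasurable
      (fun s => ENNReal.ofReal (‖f s‖ - (‖fn n s‖ - ‖fn n s - f s‖))) ν := by
    intro n
    exact (ENNReal.measurable_ofReal.comp_aemeasurable
      ((int_kn n).aestronglyMeasurable.aemeasurable))
  have hK_top : ∀ n, K n ≠ ⊤ := by
    intro n
    have : K n ≤ ∫⁻ s, ENNReal.ofReal (2 * ‖f s‖) ∂ν :=
      lintegral_mono fun s => ENNReal.ofReal_le_ofReal (hkn_le n s)
    refine (lt_of_le_of_lt this ?_).ne
    calc ∫⁻ s, ENNReal.ofReal (2 * ‖f s‖) ∂ν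
        = ∫⁻ s, ENNReal.ofReal 2 * ENNReal.ofReal ‖f s‖ ∂ν := by
          refine lintegral_congr fun s => ENNReal.ofReal_mul (by norm_num)
      _ = ENNReal.ofReal 2 * Lf := lintegral_const_mul' _ _ ENNReal.ofReal_ne_top
      _ < ⊤ := ENNReal.mul_lt_top ENNReal.ofReal_lt_top hLf_top.lt_top
  have hK_int : ∀ n, (∫ s, (‖f s‖ - (‖fn n s‖ - ‖fn n s - f s‖)) ∂ν) = (K n).toReal := by
    intro n
    rw [hKdef]
    exact integral_eq_lintegral_of_nonneg_ae
      (Filter.Eventually.of_forall fun s => hkn_nonneg n s) (int_kn n).aestronglyMeasurable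
  have hkey' : ∀ᵐ s ∂ν, ∀ ε : ℝ, 0 < ε →
      ∀ᶠ n in atTop, ‖fn n s‖ ≤ g s + ε ∧ g s - ε ≤ ‖fn n s - f s‖ :=
    ae_restrict_of_ae_restrict_of_subset hsub hkey
  have hliminf : ∀ a : ℝ, 0 < a → Lf - ENNReal.ofReal a ≤ liminf K atTop := by
    intro a ha
    have hpt : ∀ᵐ s ∂ν, ENNReal.ofReal (‖f s‖ - a) ≤
        liminf (fun n => ENNReal.ofReal (‖f s‖ - (‖fn n s‖ - ‖fn n s - f s‖))) atTop := by
      filter_upwards [hkey'] with s hs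
      have hev := hs (a/2) (by linarith)
      have hev' : ∀ᶠ n in atTop, ENNReal.ofReal (‖f s‖ - a) ≤
          ENNReal.ofReal (‖f s‖ - (‖fn n s‖ - ‖fn n s - f s‖)) := by
        filter_upwards [hev] with n hn
        exact ENNReal.ofReal_le_ofReal (by cases hn with | intro h1 h2 => linarith)
      calc ENNReal.ofReal (‖f s‖ - a)
          = liminf (fun _ : ℕ => ENNReal.ofReal (‖f s‖ - a)) atTop := (liminf_const _).symm
        _ ≤ _ := liminf_le_liminf hev'
    have hfatou := lintegral_liminf_le' hK_meas (μ := ν) (u := atTop)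
    have hint : (∫⁻ s, ENNReal.ofReal (‖f s‖ - a) ∂ν) ≥ Lf - ENNReal.ofReal a := by
      rw [ge_iff_le, tsub_le_iff_right]
      calc Lf = ∫⁻ s, ENNReal.ofReal ‖f s‖ ∂ν := rfl
        _ ≤ ∫⁻ s, (ENNReal.ofReal (‖f s‖ - a) + ENNReal.ofReal a) ∂ν := by
            refine lintegral_mono fun s => ?_
            calc ENNReal.ofReal ‖f s‖ = ENNReal.ofReal ((‖f s‖ - a) + a) := by ring_nf
              _ ≤ _ := ENNReal.ofReal_add_le
        _ = (∫⁻ s, ENNReal.ofReal (‖f s‖ - a) ∂ν) + ENNReal.ofReal a * ν univ := by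
            rw [lintegral_add_right _ measurable_const, lintegral_const]
        _ ≤ (∫⁻ s, ENNReal.ofReal (‖f s‖ - a) ∂ν) + ENNReal.ofReal a := by
            refine add_le_add le_rfl ?_
            have : ν univ ≤ 1 := by
              rw [hν, Measure.restrict_apply_univ, Real.volume_Ioc]
              exact ENNReal.ofReal_le_one.mpr (by linarith [ht.2])
            calc ENNReal.ofReal a * ν univ ≤ ENNReal.ofReal a * 1 :=
                  mul_le_mul_right this _
              _ = ENNReal.ofReal a := mul_one _
    calc Lf - ENNReal.ofReal a ≤ ∫⁻ s, ENNReal.ofReal (‖f s‖ - a) ∂ν := hint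
      _ ≤ ∫⁻ s, liminf (fun n => ENNReal.ofReal (‖f s‖ - (‖fn n s‖ - ‖fn n s - f s‖))) atTop ∂ν :=
          lintegral_mono_ae hpt
      _ ≤ liminf K atTop := hfatou
  have hval : ∀ n, Phi (fn n) t - Phi (fun s => fn n s - f s) t =
      (1/t) * ∫ s, (‖fn n s‖ - ‖fn n s - f s‖) ∂ν := by
    intro n
    rw [Phi, Phi, ← mul_sub, integral_sub (int_fn n) (int_hn n)]
  rw [Metric.tendsto_atTop]
  intro ε hε
  have htε : 0 < t * ε / 2 := by positivity
  have hfinal : ∀ᶠ n in atTop, (∫ s, (‖fn n s‖ - ‖fn n s - f s‖) ∂ν) ≤ t * ε / 2 := by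
    rcases le_or_gt c (t * ε / 2) with hcase | hcase
    · refine Filter.Eventually.of_forall fun n => ?_
      calc (∫ s, (‖fn n s‖ - ‖fn n s - f s‖) ∂ν) ≤ ∫ s, ‖f s‖ ∂ν :=
          integral_mono (int_dn n) int_f fun s => hdn_le n s
        _ ≤ t * ε / 2 := hcase
    · have hlt : Lf - ENNReal.ofReal (t * ε / 2) < liminf K atTop := by
        have h1 : Lf - ENNReal.ofReal (t * ε / 2) = ENNReal.ofReal (c - t * ε / 2) := by
          rw [← hLf_ofReal, ← ENNReal.ofReal_sub _ htε.le]
        have h2 : Lf - ENNReal.ofReal (t * ε / 4) = ENNReal.ofReal (c - t * ε / 4) := by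
          rw [← hLf_ofReal, ← ENNReal.ofReal_sub _ (by positivity : (0:ℝ) ≤ t * ε / 4)]
        calc Lf - ENNReal.ofReal (t * ε / 2) = ENNReal.ofReal (c - t * ε / 2) := h1
          _ < ENNReal.ofReal (c - t * ε / 4) := by
              rw [ENNReal.ofReal_lt_ofReal_iff (by linarith)]
              linarith
          _ = Lf - ENNReal.ofReal (t * ε / 4) := h2.symm
          _ ≤ liminf K atTop := hliminf _ (by positivity)
      have hev := eventually_lt_of_lt_liminf hlt
      filter_upwards [hev] with n hn
      have hKn : c - t * ε / 2 ≤ (K n).toReal := by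
        have : ENNReal.ofReal (c - t * ε / 2) ≤ K n := by
          refine le_trans ?_ hn.le
          rw [← hLf_ofReal, ← ENNReal.ofReal_sub _ htε.le]
        calc c - t * ε / 2 = (ENNReal.ofReal (c - t * ε / 2)).toReal :=
              (ENNReal.toReal_ofReal (by linarith)).symm
          _ ≤ (K n).toReal := ENNReal.toReal_mono (hK_top n) this
      have hsplit : (∫ s, (‖fn n s‖ - ‖fn n s - f s‖) ∂ν) = c - (K n).toReal := by
        rw [← hK_int n, ← integral_sub int_f (int_kn n)]
        simp only [sub_sub_cancel]
      rw [hsplit]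
      linarith
  obtain ⟨N, hN⟩ := eventually_atTop.mp hfinal
  refine ⟨N, fun n hnN => ?_⟩
  have hn := hN n hnN
  rw [Real.dist_eq, hval n]
  have h1 : (1/t) * (∫ s, (‖fn n s‖ - ‖fn n s - f s‖) ∂ν) ≤ ε / 2 := by
    rw [div_mul_eq_mul_div, one_mul, div_le_div_iff₀ htpos (by norm_num : (0:ℝ) < 2)]
    nlinarith [hn]
  have h2 : |max ((1/t) * ∫ s, (‖fn n s‖ - ‖fn n s - f s‖) ∂ν) 0 - 0| ≤ ε/2 := by
    rw [sub_zero, abs_of_nonneg (le_max_right _ _)]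
    exact max_le h1 (by linarith)
  linarith [h2]

end Stmt6

open Stmt6 in
/-- If `X` has the nonstrict Opial property, `(fₙ)` is norm-bounded in
`Ces_p(X)`, `(fₙ(t))` is weakly null a.e. and `‖fₙ(t)‖ → g(t)` a.e. for some `g ∈ Ces_p`,
then `limsup ‖fₙ‖ ≤ 2^{1−1/p} limsup ‖fₙ − f‖` for every `f ∈ Ces_p`. -/
theorem stmt6 (p : ℝ) (hp : 1 ≤ p)
    {X : Type*} [NormedAddCommGroup X] [NormedSpace ℝ X] [CompleteSpace X]
    (hX : NonstrictOpial X)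
    (fn : ℕ → ℝ → X) (hfn : ∀ n, MemCesF p (fn n))
    (hbdd : ∃ C : ℝ, ∀ n, cesFNorm p (fn n) ≤ C)
    (hweak : ∀ᵐ t ∂(volume.restrict (Ioc (0 : ℝ) 1)),
      ∀ φ : X →L[ℝ] ℝ, Tendsto (fun n => φ (fn n t)) atTop (𝓝 0))
    (g : ℝ → ℝ) (hg : MemCesF p g)
    (hconv : ∀ᵐ t ∂(volume.restrict (Ioc (0 : ℝ) 1)),
      Tendsto (fun n => ‖fn n t‖) atTop (𝓝 (g t)))
    (f : ℝ → X) (hf : MemCesF p f) :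
    limsup (fun n => cesFNorm p (fn n)) atTop ≤
      2 ^ (1 - 1 / p) * limsup (fun n => cesFNorm p (fun s => fn n s - f s)) atTop := by
  have hp0 : 0 < p := lt_of_lt_of_le one_pos hp
  obtain ⟨C, hC⟩ := hbdd
  set μ : Measure ℝ := volume.restrict (Ioc (0:ℝ) 1) with hμ
  set P : ℝ≥0∞ := ENNReal.ofReal p with hP
  have hP1 : 1 ≤ P := by rw [hP]; exact ENNReal.one_le_ofReal.mpr hp
  have hsubmem : ∀ n, MemCesF p (fun s => fn n s - f s) := fun n => memces_sub hp0 (hfn n) hf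
  -- the key pointwise (in `s`) consequence of the Opial property
  have hkey : ∀ᵐ s ∂μ, ∀ ε : ℝ, 0 < ε →
      ∀ᶠ n in atTop, ‖fn n s‖ ≤ g s + ε ∧ g s - ε ≤ ‖fn n s - f s‖ := by
    filter_upwards [hweak, hconv] with s hw hc
    intro ε hε
    have e1 : ∀ᶠ n in atTop, ‖fn n s‖ ≤ g s + ε := by
      have := hc.eventually_lt_const (show g s < g s + ε by linarith)
      exact this.mono fun n h => h.le
    have e2 := key_pointwise hX (fun n => fn n s) (f s) (g s) hw hc hε
    exact e1.and e2
  set r : ℕ → ℝ → ℝ := fun n t => max (Phi (fn n) t - Phi (fun s => fn n s - f s) t) 0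
    with hrdef
  have hgood : ∀ᵐ t ∂μ, t ∈ Ioc (0:ℝ) 1 ∧ Iin f t < ⊤ ∧ ∀ n, Iin (fn n) t < ⊤ := by
    filter_upwards [ae_restrict_mem measurableSet_Ioc, memces_lt_top' hp0 hf,
      ae_all_iff.mpr fun n => memces_lt_top' hp0 (hfn n)] with t h1 h2 h3
    exact ⟨h1, h2, h3⟩
  have hr0 : ∀ n t, 0 ≤ r n t := fun n t => le_max_right _ _
  have hr_tendsto : ∀ᵐ t ∂μ, Tendsto (fun n => r n t) atTop (𝓝 0) := by
    filter_upwards [hgood] with t htg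
    exact tendsto_r fn f g (fun n => (hfn n).1) hf.1 hkey htg.1 htg.2.1 htg.2.2
  have hbounds : ∀ᵐ t ∂μ, ∀ n, r n t ≤ Phi f t ∧
      Phi (fun s => fn n s - f s) t ≤ Phi (fn n) t + Phi f t := by
    filter_upwards [hgood] with t htg
    intro n
    have hb := phi_diff_bounds (hfn n).1 hf.1 htg.1 (htg.2.2 n) htg.2.1
    exact ⟨max_le hb.1 (Phi_nonneg f t), hb.2⟩
  -- measurability
  have hFm : ∀ n, AEStronglyMeasurable (Phi (fn n)) μ := fun n => aesm_Phi _ (hfn n).1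
  have hHm : ∀ n, AEStronglyMeasurable (Phi (fun s => fn n s - f s)) μ :=
    fun n => aesm_Phi _ (hsubmem n).1
  have hFfm : AEStronglyMeasurable (Phi f) μ := aesm_Phi _ hf.1
  have hrm : ∀ n, AEStronglyMeasurable (r n) μ := fun n =>
    (((hFm n).aemeasurable.sub (hHm n).aemeasurable).max aemeasurable_const).aestronglyMeasurable
  -- eLpNorm finiteness
  have heF : ∀ n, eLpNorm (Phi (fn n)) P μ ≠ ⊤ := by
    intro n
    rw [hP, eLp_eq hp0 (hFm n) (Phi_nonneg _)]
    exact (ENNReal.rpow_lt_top_of_nonneg (by positivity) (lint_lt_top hp0 (hfn n)).ne).ne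
  have heH : ∀ n, eLpNorm (Phi (fun s => fn n s - f s)) P μ ≠ ⊤ := by
    intro n
    rw [hP, eLp_eq hp0 (hHm n) (Phi_nonneg _)]
    exact (ENNReal.rpow_lt_top_of_nonneg (by positivity) (lint_lt_top hp0 (hsubmem n)).ne).ne
  have heFf : eLpNorm (Phi f) P μ ≠ ⊤ := by
    rw [hP, eLp_eq hp0 hFfm (Phi_nonneg _)]
    exact (ENNReal.rpow_lt_top_of_nonneg (by positivity) (lint_lt_top hp0 hf).ne).ne
  have her : ∀ n, eLpNorm (r n) P μ ≤ eLpNorm (Phi f) P μ := by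
    intro n
    refine eLpNorm_mono_ae ?_
    filter_upwards [hbounds] with t htb
    rw [Real.norm_of_nonneg (hr0 n t), Real.norm_of_nonneg (Phi_nonneg f t)]
    exact (htb n).1
  have her_top : ∀ n, eLpNorm (r n) P μ ≠ ⊤ := fun n => (lt_of_le_of_lt (her n)
    (lt_top_iff_ne_top.mpr heFf)).ne
  -- the error terms tend to zero
  have hRlim : Tendsto (fun n => ∫⁻ t, ENNReal.ofReal (r n t ^ p) ∂μ) atTop (𝓝 0) := by
    have hDCT := tendsto_lintegral_of_dominated_convergence'
      (μ := μ) (F := fun n t => ENNReal.ofReal (r n t ^ p)) (f := fun _ => (0:ℝ≥0∞))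
      (bound := fun t => ENNReal.ofReal (Phi f t ^ p))
      (fun n => ENNReal.measurable_ofReal.comp_aemeasurable
        ((hrm n).aemeasurable.pow_const p))
      (by
        intro n
        filter_upwards [hbounds] with t htb
        exact ENNReal.ofReal_le_ofReal
          (Real.rpow_le_rpow (hr0 n t) (htb n).1 hp0.le))
      (by
        have := lint_lt_top hp0 hf
        exact this.ne)
      (by
        filter_upwards [hr_tendsto] with t htt
        have h1 : Tendsto (fun n => r n t ^ p) atTop (𝓝 0) := by
          have := (Real.continuousAt_rpow_const 0 p (Or.inr hp0.le)).tendsto.comp htt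
          simpa [Real.zero_rpow hp0.ne', Function.comp_def] using this
        have h2 := (ENNReal.continuous_ofReal.tendsto 0).comp h1
        simpa [Function.comp_def] using h2)
    simpa using hDCT
  -- named sequences
  set a : ℕ → ℝ := fun n => cesFNorm p (fn n) with hadef
  set b : ℕ → ℝ := fun n => cesFNorm p (fun s => fn n s - f s) with hbdef
  set c : ℕ → ℝ := fun n => (eLpNorm (r n) P μ).toReal with hcdef
  have ha_eq : ∀ n, a n = (eLpNorm (Phi (fn n)) P μ).toReal := fun n => ces_eq hp0 (hfn n)
  have hb_eq : ∀ n, b n = (eLpNorm (Phi (fun s => fn n s - f s)) P μ).toReal :=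
    fun n => ces_eq hp0 (hsubmem n)
  have ha0 : ∀ n, 0 ≤ a n := fun n => by rw [ha_eq n]; exact ENNReal.toReal_nonneg
  have hb0 : ∀ n, 0 ≤ b n := fun n => by rw [hb_eq n]; exact ENNReal.toReal_nonneg
  have hc0' : ∀ n, 0 ≤ c n := fun n => ENNReal.toReal_nonneg
  -- c tends to zero
  have hc_tendsto : Tendsto c atTop (𝓝 0) := by
    have hcr : ∀ n, c n = ((∫⁻ t, ENNReal.ofReal (r n t ^ p) ∂μ).toReal) ^ (1/p) := by
      intro n
      rw [hcdef]
      simp only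
      rw [hP, eLp_eq hp0 (hrm n) (hr0 n), ← ENNReal.toReal_rpow]
    have h2 : Tendsto (fun n => (∫⁻ t, ENNReal.ofReal (r n t ^ p) ∂μ).toReal) atTop (𝓝 0) := by
      have := (ENNReal.tendsto_toReal (by simp : (0:ℝ≥0∞) ≠ ⊤)).comp hRlim
      simpa [Function.comp_def] using this
    have h3 := (Real.continuousAt_rpow_const 0 (1/p)
      (Or.inr (by positivity : (0:ℝ) ≤ 1/p))).tendsto.comp h2
    rw [Real.zero_rpow (by positivity : (1:ℝ)/p ≠ 0)] at h3
    exact Tendsto.congr (fun n => (hcr n).symm) h3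
  -- the triangle-type inequality `a n ≤ b n + c n`
  have htri : ∀ n, a n ≤ b n + c n := by
    intro n
    have e1 : eLpNorm (Phi (fn n)) P μ ≤
        eLpNorm (Phi (fun s => fn n s - f s) + r n) P μ := by
      refine eLpNorm_mono_ae (Filter.Eventually.of_forall fun t => ?_)
      have hFn := Phi_nonneg (fn n) t
      have hHn := Phi_nonneg (fun s => fn n s - f s) t
      have hr := hr0 n t
      have hle : Phi (fn n) t ≤ Phi (fun s => fn n s - f s) t + r n t := by
        have := le_max_left (Phi (fn n) t - Phi (fun s => fn n s - f s) t) 0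
        rw [hrdef]; simp only; linarith
      rw [Real.norm_of_nonneg hFn, Pi.add_apply,
        Real.norm_of_nonneg (add_nonneg hHn hr)]
      exact hle
    have e2 : eLpNorm (Phi (fun s => fn n s - f s) + r n) P μ ≤
        eLpNorm (Phi (fun s => fn n s - f s)) P μ + eLpNorm (r n) P μ :=
      eLpNorm_add_le (hHm n) (hrm n) hP1
    rw [ha_eq n, hb_eq n, hcdef]
    simp only
    rw [← ENNReal.toReal_add (heH n) (her_top n)]
    exact ENNReal.toReal_mono (by
      exact ENNReal.add_ne_top.mpr ⟨heH n, her_top n⟩) (e1.trans e2)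
  -- boundedness of `b`
  have hbC : ∀ n, b n ≤ C + (eLpNorm (Phi f) P μ).toReal := by
    intro n
    have e1 : eLpNorm (Phi (fun s => fn n s - f s)) P μ ≤
        eLpNorm (Phi (fn n) + Phi f) P μ := by
      refine eLpNorm_mono_ae ?_
      filter_upwards [hbounds] with t htb
      rw [Real.norm_of_nonneg (Phi_nonneg _ t), Pi.add_apply,
        Real.norm_of_nonneg (add_nonneg (Phi_nonneg _ t) (Phi_nonneg _ t))]
      exact (htb n).2
    have e2 : eLpNorm (Phi (fn n) + Phi f) P μ ≤
        eLpNorm (Phi (fn n)) P μ + eLpNorm (Phi f) P μ :=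
      eLpNorm_add_le (hFm n) hFfm hP1
    have e3 : b n ≤ a n + (eLpNorm (Phi f) P μ).toReal := by
      rw [ha_eq n, hb_eq n, ← ENNReal.toReal_add (heF n) heFf]
      exact ENNReal.toReal_mono (ENNReal.add_ne_top.mpr ⟨heF n, heFf⟩) (e1.trans e2)
    exact e3.trans (add_le_add_left (hC n) _)
  -- limsup bookkeeping
  have hA_bdd : IsBoundedUnder (· ≤ ·) atTop a :=
    ⟨C, Filter.eventually_map.mpr (Filter.Eventually.of_forall hC)⟩
  have hB_bdd : IsBoundedUnder (· ≤ ·) atTop b :=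
    ⟨C + (eLpNorm (Phi f) P μ).toReal,
      Filter.eventually_map.mpr (Filter.Eventually.of_forall hbC)⟩
  have hA_cob : IsCoboundedUnder (· ≤ ·) atTop a :=
    isCoboundedUnder_le_of_le atTop ha0
  have hB_cob : IsCoboundedUnder (· ≤ ·) atTop b :=
    isCoboundedUnder_le_of_le atTop hb0
  have hkeylim : limsup a atTop ≤ limsup b atTop := by
    refine le_of_forall_pos_le_add fun ε hε => ?_
    have hev : ∀ᶠ n in atTop, a n ≤ b n + ε := by
      have hcev : ∀ᶠ n in atTop, c n < ε := hc_tendsto.eventually_lt_const hε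
      filter_upwards [hcev] with n h
      linarith [htri n]
    have hBε_bdd : IsBoundedUnder (· ≤ ·) atTop (fun n => b n + ε) := by
      obtain ⟨M, hM⟩ := hB_bdd
      exact ⟨M + ε, by
        rw [Filter.eventually_map] at hM ⊢
        filter_upwards [hM] with n h
        exact add_le_add_left h ε⟩
    calc limsup a atTop ≤ limsup (fun n => b n + ε) atTop :=
        limsup_le_limsup hev hA_cob hBε_bdd
      _ = limsup b atTop + ε := limsup_add_const atTop b ε hB_bdd hB_cob
  have hlims0 : 0 ≤ limsup b atTop :=
    le_limsup_of_frequently_le (Filter.Frequently.of_forall hb0) hB_bdd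
  have hcoef : (1:ℝ) ≤ 2 ^ (1 - 1/p) := by
    refine Real.one_le_rpow one_le_two ?_
    have : 1/p ≤ 1 := by
      rw [div_le_one hp0]; exact hp
    linarith
  calc limsup a atTop ≤ limsup b atTop := hkeylim
    _ = 1 * limsup b atTop := (one_mul _).symm
    _ ≤ 2 ^ (1 - 1/p) * limsup b atTop := mul_le_mul_of_nonneg_right hcoef hlims0
end

section
/- In the space c of convergent real sequences with the supremum norm, let e_n denote the sequence whose n-th entry is 1 and all other entries are 0, and let x = (1,1,1,…). Then the sequence (2e_n)_{n∈ℕ} converges weakly to 0 in c, limsup_{n→∞} ‖2e_n‖_∞ = 2, and limsup_{n→∞} ‖2e_n − x‖_∞ = 1; hence the constant 2 in the inequality limsup ‖x_n‖ ≤ 2 limsup ‖x_n − x‖ (valid for all weakly null sequences in any Banach space) is best possible. -/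
open Filter
open scoped ENNReal Topology

noncomputable def cSpace : Submodule ℝ (lp (fun _ : ℕ => ℝ) ∞) where
  carrier := {a | ∃ l : ℝ, Tendsto (fun n => (a : ∀ _ : ℕ, ℝ) n) atTop (𝓝 l)}
  add_mem' := by
    rintro a b ⟨la, ha⟩ ⟨lb, hb⟩
    exact ⟨la + lb, by simpa [lp.coeFn_add, Pi.add_apply] using ha.add hb⟩
  zero_mem' := ⟨0, by simp [lp.coeFn_zero]⟩
  smul_mem' := by
    rintro c a ⟨l, h⟩
    exact ⟨c * l, by simpa [lp.coeFn_smul, Pi.smul_apply, smul_eq_mul] using h.const_mul c⟩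

noncomputable def eVec (n : ℕ) : cSpace :=
  ⟨lp.single ∞ n (2 : ℝ), by
    refine ⟨0, Tendsto.congr' ?_ tendsto_const_nhds⟩
    filter_upwards [eventually_gt_atTop n] with m hm
    rw [lp.single_apply]
    simp [hm.ne']⟩

noncomputable def xVec : cSpace :=
  ⟨⟨fun _ => (1 : ℝ), memℓp_infty ⟨1, by rintro y ⟨i, rfl⟩; simp⟩⟩,
    ⟨1, tendsto_const_nhds⟩⟩

lemma eVec_norm (n : ℕ) : ‖eVec n‖ = 2 := by
  have heq : ∀ i, ((eVec n : lp (fun _ : ℕ => ℝ) ∞) : ∀ _, ℝ) i = lp.single (E := fun _ : ℕ => ℝ) ∞ n (2:ℝ) i :=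
    fun _ => rfl
  have h1 : ‖(eVec n : lp (fun _ : ℕ => ℝ) ∞)‖ ≤ 2 := by
    refine lp.norm_le_of_forall_le (by norm_num) fun i => ?_
    rw [heq i, lp.single_apply, Pi.single_apply]
    split <;> simp
  have h2 : (2:ℝ) ≤ ‖(eVec n : lp (fun _ : ℕ => ℝ) ∞)‖ := by
    have h := lp.norm_apply_le_norm (E := fun _ : ℕ => ℝ) ENNReal.top_ne_zero
      (eVec n : lp (fun _ : ℕ => ℝ) ∞) n
    rw [heq n, lp.single_apply_self] at h
    have e2 : ‖(2:ℝ)‖ = 2 := by rw [Real.norm_eq_abs]; norm_num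
    exact e2 ▸ h
  exact le_antisymm h1 h2

lemma eVec_sub_norm (n : ℕ) : ‖eVec n - xVec‖ = 1 := by
  have hcoe : ∀ i, ((eVec n - xVec : cSpace) : lp (fun _ : ℕ => ℝ) ∞) i
      = (if i = n then (2:ℝ) else 0) - 1 := by
    intro i
    have : ((eVec n - xVec : cSpace) : lp (fun _ : ℕ => ℝ) ∞) i
        = (eVec n : lp (fun _ : ℕ => ℝ) ∞) i - (xVec : lp (fun _ : ℕ => ℝ) ∞) i := by
      simp
    rw [this]
    simp only [eVec, xVec, lp.single_apply, Pi.single_apply]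
  have h1 : ‖((eVec n - xVec : cSpace) : lp (fun _ : ℕ => ℝ) ∞)‖ ≤ 1 := by
    refine lp.norm_le_of_forall_le (by norm_num) fun i => ?_
    show ‖((eVec n - xVec : cSpace) : lp (fun _ : ℕ => ℝ) ∞) i‖ ≤ 1
    rw [hcoe i]
    split <;> norm_num
  have h2 : (1:ℝ) ≤ ‖((eVec n - xVec : cSpace) : lp (fun _ : ℕ => ℝ) ∞)‖ := by
    have h := lp.norm_apply_le_norm (E := fun _ : ℕ => ℝ) ENNReal.top_ne_zero
      ((eVec n - xVec : cSpace) : lp (fun _ : ℕ => ℝ) ∞) n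
    rw [hcoe n, if_pos rfl] at h
    have e2 : ‖(2:ℝ) - 1‖ = 1 := by rw [Real.norm_eq_abs]; norm_num
    exact e2 ▸ h
  exact le_antisymm h1 h2

/-- In the space `c` of convergent real sequences with the sup-norm, the
sequence `(2eₙ)` converges weakly to `0`, `limsup ‖2eₙ‖ = 2` and `limsup ‖2eₙ − x‖ = 1`
where `x = (1,1,1,…)`; hence the constant `2` in the inequality
`limsup ‖xₙ‖ ≤ 2 limsup ‖xₙ − x‖` for weakly null sequences is best possible. -/
theorem stmt12 :
    (∀ φ : cSpace →L[ℝ] ℝ, Tendsto (fun n => φ (eVec n)) atTop (𝓝 0)) ∧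
      limsup (fun n => ‖eVec n‖) atTop = 2 ∧
      limsup (fun n => ‖eVec n - xVec‖) atTop = 1 := by
  refine ⟨?_, ?_, ?_⟩
  · intro φ
    have hsum : Summable (fun n => |φ (eVec n)|) := by
      apply summable_of_sum_range_le (c := 2 * ‖φ‖) (fun n => abs_nonneg _)
      intro N
      set ε : ℕ → ℝ := fun i => if 0 ≤ φ (eVec i) then 1 else -1 with hε
      set v : cSpace := ∑ i ∈ Finset.range N, ε i • eVec i with hv
      have hφv : φ v = ∑ i ∈ Finset.range N, |φ (eVec i)| := by
        rw [hv, map_sum]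
        refine Finset.sum_congr rfl fun i _ => ?_
        rw [map_smul, smul_eq_mul]
        simp only [hε]
        split <;> rename_i h
        · rw [abs_of_nonneg h]; ring
        · rw [abs_of_neg (not_le.mp h)]; ring
      have hvnorm : ‖(v : lp (fun _ : ℕ => ℝ) ∞)‖ ≤ 2 := by
        refine lp.norm_le_of_forall_le (by norm_num) fun j => ?_
        have hcoe : ((v : cSpace) : lp (fun _ : ℕ => ℝ) ∞) j
            = ∑ i ∈ Finset.range N, ε i * (if j = i then (2:ℝ) else 0) := by
          rw [hv]
          rw [AddSubmonoidClass.coe_finset_sum]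
          rw [lp.coeFn_sum, Finset.sum_apply]
          refine Finset.sum_congr rfl fun i _ => ?_
          rw [Submodule.coe_smul, lp.coeFn_smul]
          simp only [Pi.smul_apply, smul_eq_mul, eVec, lp.single_apply, Pi.single_apply]
        show ‖((v : cSpace) : lp (fun _ : ℕ => ℝ) ∞) j‖ ≤ 2
        rw [hcoe]
        rcases lt_or_ge j N with hj | hj
        · rw [Finset.sum_eq_single j]
          · have : |ε j| = 1 := by simp only [hε]; split <;> simp
            rw [Real.norm_eq_abs, if_pos rfl, abs_mul, this]
            norm_num
          · intro i _ hi
            rw [if_neg (Ne.symm hi), mul_zero]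
          · intro h; exact absurd (Finset.mem_range.mpr hj) h
        · rw [Finset.sum_eq_zero]
          · simp
          · intro i hi
            have : j ≠ i := by
              intro h; subst h
              exact absurd (Finset.mem_range.mp hi) (not_lt.mpr hj)
            rw [if_neg this, mul_zero]
      calc ∑ i ∈ Finset.range N, |φ (eVec i)| = φ v := hφv.symm
        _ ≤ |φ v| := le_abs_self _
        _ ≤ ‖φ‖ * ‖v‖ := φ.le_opNorm v
        _ ≤ ‖φ‖ * 2 := by
            have hvnorm' : ‖v‖ ≤ 2 := hvnorm
            have := norm_nonneg φ
            nlinarith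
        _ = 2 * ‖φ‖ := by ring
    have := hsum.tendsto_atTop_zero
    exact (tendsto_zero_iff_abs_tendsto_zero _).mpr this
  · simp only [eVec_norm]
    exact limsup_const 2
  · simp only [eVec_sub_norm]
    exact limsup_const 1
end
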